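/- arXiv:1710.09976 — 6 statements merged into one kernel-verified Lean document; each statement's English description precedes it below -/
import Mathlib

section
/- Let 1 < γ < 2, τ > 0, N ≥ 1 an integer, T = Nτ, and define a_k^{(γ)} = (k+1)^{2−γ} − k^{2−γ} for integers k ≥ 0. Then for every vector (S_1, …, S_N) ∈ ℝ^N and every real constant P, (τ^{1−γ}/Γ(3−γ)) · Σ_{n=1}^{N} [a_0^{(γ)} S_n − Σ_{k=1}^{n−1} (a_{n−k−1}^{(γ)} − a_{n−k}^{(γ)}) S_k − a_{n−1}^{(γ)} P] · S_n ≥ (T^{1−γ}/(2Γ(2−γ))) · Σ_{n=1}^{N} S_n² − (T^{2−γ}/(2τΓ(3−γ))) · P², where Γ is the Gamma function. -/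
open Finset

private lemma abel_nonneg (b c : ℕ → ℝ) (hb : ∀ i, 0 ≤ b i) (hmono : ∀ i, b i ≤ b (i + 1))
    (hc : ∀ i, 0 ≤ c i) (n : ℕ) :
    0 ≤ (∑ i ∈ range n, b i * (c i - c (i + 1))) + b n * c n := by
  induction n with
  | zero => simpa using mul_nonneg (hb 0) (hc 0)
  | succ n ih =>
    rw [Finset.sum_range_succ]
    nlinarith [mul_nonneg (sub_nonneg.mpr (hmono n)) (hc (n + 1))]

private lemma abel_id (g c : ℕ → ℝ) (N : ℕ) :
    ∑ i ∈ range N, g i * (c (i + 1) - c i)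
      = (∑ i ∈ range N, (g i - g (i + 1)) * c (i + 1)) + g N * c N - g 0 * c 0 := by
  induction N with
  | zero => simp
  | succ N ih => rw [Finset.sum_range_succ, Finset.sum_range_succ, ih]; ring

private lemma rpow_lower (p : ℝ) (hp0 : 0 < p) (hp1 : p < 1) (x : ℝ) (hx : 1 ≤ x) :
    p * x ^ (p - 1) ≤ x ^ p - (x - 1) ^ p := by
  have hx0 : 0 < x := lt_of_lt_of_le one_pos hx
  have h1x : (1:ℝ)/x ≤ 1 := div_le_one_of_le₀ hx hx0.le
  have hs : (-1:ℝ) ≤ -1/x := by rw [neg_div]; linarith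
  have hd : (0:ℝ) ≤ 1 + (-1/x) := by rw [neg_div]; linarith
  have hbern : (1 + (-1/x)) ^ p ≤ 1 + p * (-1/x) :=
    rpow_one_add_le_one_add_mul_self hs hp0.le hp1.le
  have h2 : (x - 1) ^ p = x ^ p * (1 + (-1/x)) ^ p := by
    rw [← Real.mul_rpow hx0.le hd]; congr 1; field_simp; ring
  have h3 : x ^ p * (1 + p * (-1/x)) = x ^ p - p * x ^ (p - 1) := by
    have hxp : x ^ (p - 1) = x ^ p / x := by rw [Real.rpow_sub hx0, Real.rpow_one]
    rw [hxp]; field_simp; ring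
  have h4 : x ^ p * (1 + (-1/x)) ^ p ≤ x ^ p * (1 + p * (-1/x)) :=
    mul_le_mul_of_nonneg_left hbern (Real.rpow_nonneg hx0.le p)
  rw [h2]; linarith [h4, h3.symm.le, h3.le]

private lemma rpow_upper (p : ℝ) (hp0 : 0 < p) (hp1 : p < 1) (x : ℝ) (hx : 1 ≤ x) :
    (x + 1) ^ p - x ^ p ≤ p * x ^ (p - 1) := by
  have hx0 : 0 < x := lt_of_lt_of_le one_pos hx
  have hs : (-1:ℝ) ≤ 1/x := by
    have h : (0:ℝ) ≤ 1/x := by positivity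
    linarith
  have hd : (0:ℝ) ≤ 1 + 1/x := by positivity
  have hbern : (1 + 1/x) ^ p ≤ 1 + p * (1/x) :=
    rpow_one_add_le_one_add_mul_self hs hp0.le hp1.le
  have h2 : (x + 1) ^ p = x ^ p * (1 + 1/x) ^ p := by
    rw [← Real.mul_rpow hx0.le hd]; congr 1; field_simp
  have h3 : x ^ p * (1 + p * (1/x)) = x ^ p + p * x ^ (p - 1) := by
    have hxp : x ^ (p - 1) = x ^ p / x := by rw [Real.rpow_sub hx0, Real.rpow_one]
    rw [hxp]; field_simp
  have h4 : x ^ p * (1 + 1/x) ^ p ≤ x ^ p * (1 + p * (1/x)) :=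
    mul_le_mul_of_nonneg_left hbern (Real.rpow_nonneg hx0.le p)
  rw [h2]; linarith

/-- Lemma 2.1: coercivity of the L2 discretization coefficients of the Caputo
derivative of order `1 < γ < 2`. -/
theorem L2_coefficients_coercivity
    (γ τ : ℝ) (hγ1 : 1 < γ) (hγ2 : γ < 2) (hτ : 0 < τ)
    (N : ℕ) (hN : 1 ≤ N) (T : ℝ) (hT : T = N * τ)
    (a : ℕ → ℝ) (ha : ∀ k, a k = ((k : ℝ) + 1) ^ (2 - γ) - (k : ℝ) ^ (2 - γ))
    (S : ℕ → ℝ) (P : ℝ) :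
    τ ^ (1 - γ) / Real.Gamma (3 - γ) *
        ∑ n ∈ Finset.Icc 1 N,
          (a 0 * S n - (∑ k ∈ Finset.Icc 1 (n - 1), (a (n - k - 1) - a (n - k)) * S k)
            - a (n - 1) * P) * S n
      ≥ T ^ (1 - γ) / (2 * Real.Gamma (2 - γ)) * ∑ n ∈ Finset.Icc 1 N, (S n) ^ 2
        - T ^ (2 - γ) / (2 * τ * Real.Gamma (3 - γ)) * P ^ 2 := by
  have hb0 : (0:ℝ) < 2 - γ := by linarith
  have hb1 : (2:ℝ) - γ < 1 := by linarith
  have hΓ2 : 0 < Real.Gamma (2 - γ) := Real.Gamma_pos_of_pos hb0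
  have hΓ3 : Real.Gamma (3 - γ) = (2 - γ) * Real.Gamma (2 - γ) := by
    have h := Real.Gamma_add_one (ne_of_gt hb0)
    rw [show (2 - γ) + 1 = 3 - γ by ring] at h
    exact h
  have hΓ3pos : 0 < Real.Gamma (3 - γ) := by rw [hΓ3]; positivity
  -- properties of the coefficients a
  have ha_lb : ∀ m : ℕ, (2 - γ) * ((m:ℝ) + 1) ^ (1 - γ) ≤ a m := by
    intro m
    have h := rpow_lower (2 - γ) hb0 hb1 ((m:ℝ) + 1) (by have := Nat.cast_nonneg (α := ℝ) m; linarith)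
    rw [show ((m:ℝ) + 1) - 1 = (m:ℝ) by ring, show (2 - γ) - 1 = 1 - γ by ring] at h
    rw [ha m]; exact h
  have ha_nonneg : ∀ m, 0 ≤ a m := by
    intro m
    refine le_trans ?_ (ha_lb m)
    positivity
  have ha_succ : ∀ m : ℕ, a (m + 1) ≤ a m := by
    intro m
    have h := rpow_upper (2 - γ) hb0 hb1 ((m:ℝ) + 1) (by have := Nat.cast_nonneg (α := ℝ) m; linarith)
    rw [show (2 - γ) - 1 = 1 - γ by ring] at h
    have h2 : a (m + 1) ≤ (2 - γ) * ((m:ℝ) + 1) ^ (1 - γ) := by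
      rw [ha (m + 1)]; push_cast; convert h using 3
    exact h2.trans (ha_lb m)
  have ha_anti : Antitone a := antitone_nat_of_succ_le ha_succ
  -- the shifted sequence
  set u : ℕ → ℝ := fun k => if k = 0 then P else S k with hu
  have hu0 : u 0 = P := rfl
  have huk : ∀ k : ℕ, u (k + 1) = S (k + 1) := fun k => if_neg (Nat.succ_ne_zero k)
  -- Step 1 : rewrite the bracket
  have hbracket : ∀ n ∈ Finset.Icc 1 N,
      (a 0 * S n - (∑ k ∈ Finset.Icc 1 (n - 1), (a (n - k - 1) - a (n - k)) * S k)
        - a (n - 1) * P) * S n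
      = (∑ i ∈ range n, a (n - 1 - i) * (u (i + 1) - u i)) * S n := by
    intro n hn
    obtain ⟨m, rfl⟩ : ∃ m, n = m + 1 :=
      ⟨n - 1, by have := (Finset.mem_Icc.mp hn).1; omega⟩
    congr 1
    simp only [Nat.add_sub_cancel]
    have hmid : ∑ k ∈ Finset.Icc 1 m, (a (m + 1 - k - 1) - a (m + 1 - k)) * S k
        = ∑ i ∈ range m, (a (m - 1 - i) - a (m - i)) * S (i + 1) := by
      rw [← Finset.Ico_add_one_right_eq_Icc, Finset.sum_Ico_eq_sum_range]
      refine Finset.sum_congr (by norm_num) fun i hi => ?_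
      have e1 : m + 1 - (1 + i) - 1 = m - 1 - i := by omega
      have e2 : m + 1 - (1 + i) = m - i := by omega
      rw [e1, e2, add_comm 1 i]
    have hR : ∑ i ∈ range (m + 1), a (m - i) * (u (i + 1) - u i)
        = a 0 * S (m + 1) - a m * P +
          ((∑ i ∈ range m, a (m - i) * S (i + 1))
            - ∑ i ∈ range m, a (m - 1 - i) * S (i + 1)) := by
      simp_rw [mul_sub]
      rw [Finset.sum_sub_distrib, Finset.sum_range_succ, Finset.sum_range_succ']
      have h1 : ∀ i ∈ range m, a (m - i) * u (i + 1) = a (m - i) * S (i + 1) :=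
        fun i _ => by rw [huk]
      have h2 : ∀ i ∈ range m, a (m - (i + 1)) * u (i + 1) = a (m - 1 - i) * S (i + 1) :=
        fun i _ => by rw [huk]; congr 2; omega
      rw [Finset.sum_congr rfl h1, Finset.sum_congr rfl h2, huk m, hu0]
      simp only [Nat.sub_self, Nat.sub_zero]
      ring
    rw [hmid, hR]
    simp_rw [sub_mul]
    rw [Finset.sum_sub_distrib]
    ring
  -- Step 2 : per-n inequality
  have hper : ∀ n ∈ Finset.Icc 1 N,
      ∑ i ∈ range n, a (n - 1 - i) * (u (i + 1) ^ 2 - u i ^ 2)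
        ≤ 2 * ((∑ i ∈ range n, a (n - 1 - i) * (u (i + 1) - u i)) * S n) := by
    intro n hn
    obtain ⟨m, rfl⟩ : ∃ m, n = m + 1 :=
      ⟨n - 1, by have := (Finset.mem_Icc.mp hn).1; omega⟩
    simp only [Nat.add_sub_cancel]
    have h0 := abel_nonneg (fun i => a (m - i)) (fun i => (S (m + 1) - u i) ^ 2)
      (fun i => ha_nonneg _) (fun i => ha_anti (by omega : m - (i + 1) ≤ m - i))
      (fun i => sq_nonneg _) (m + 1)
    have hz : (S (m + 1) - u (m + 1)) ^ 2 = 0 := by rw [huk]; ring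
    rw [hz, mul_zero, add_zero] at h0
    have hid : ∑ i ∈ range (m + 1),
          a (m - i) * ((S (m + 1) - u i) ^ 2 - (S (m + 1) - u (i + 1)) ^ 2)
        = 2 * ((∑ i ∈ range (m + 1), a (m - i) * (u (i + 1) - u i)) * S (m + 1))
          - ∑ i ∈ range (m + 1), a (m - i) * (u (i + 1) ^ 2 - u i ^ 2) := by
      rw [Finset.sum_mul, Finset.mul_sum, ← Finset.sum_sub_distrib]
      exact Finset.sum_congr rfl fun i _ => by ring
    linarith
  -- Step 3 : swap and telescope
  have hswap : ∑ n ∈ Finset.Icc 1 N, ∑ i ∈ range n, a (n - 1 - i) * (u (i + 1) ^ 2 - u i ^ 2)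
      = ∑ i ∈ range N, ((N - i : ℕ) : ℝ) ^ (2 - γ) * (u (i + 1) ^ 2 - u i ^ 2) := by
    have hcomm : ∑ n ∈ Finset.Icc 1 N, ∑ i ∈ range n,
          a (n - 1 - i) * (u (i + 1) ^ 2 - u i ^ 2)
        = ∑ i ∈ range N, ∑ n ∈ Finset.Icc (i + 1) N,
            a (n - 1 - i) * (u (i + 1) ^ 2 - u i ^ 2) :=
      Finset.sum_comm' (fun n i => by simp only [Finset.mem_Icc, Finset.mem_range]; omega)
    rw [hcomm]
    refine Finset.sum_congr rfl fun i hi => ?_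
    rw [← Finset.sum_mul]
    congr 1
    rw [← Finset.Ico_add_one_right_eq_Icc, Finset.sum_Ico_eq_sum_range]
    have hNi : N + 1 - (i + 1) = N - i := by omega
    rw [hNi]
    have hsc : ∀ j ∈ range (N - i),
        a (i + 1 + j - 1 - i) = ((j : ℝ) + 1) ^ (2 - γ) - (j : ℝ) ^ (2 - γ) := by
      intro j _
      have e : i + 1 + j - 1 - i = j := by omega
      rw [e, ha]
    rw [Finset.sum_congr rfl hsc]
    have htel := Finset.sum_range_sub (fun j : ℕ => ((j : ℝ)) ^ (2 - γ)) (N - i)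
    push_cast at htel
    rw [htel, Real.zero_rpow (ne_of_gt hb0), sub_zero]
  -- Step 4 : Abel summation
  have habel : ∑ i ∈ range N, ((N - i : ℕ) : ℝ) ^ (2 - γ) * (u (i + 1) ^ 2 - u i ^ 2)
      = (∑ i ∈ range N, a (N - 1 - i) * S (i + 1) ^ 2) - (N:ℝ) ^ (2 - γ) * P ^ 2 := by
    have h := abel_id (fun i => ((N - i : ℕ) : ℝ) ^ (2 - γ)) (fun i => u i ^ 2) N
    rw [h]
    have hsum : ∑ i ∈ range N,
          (((N - i : ℕ) : ℝ) ^ (2 - γ) - ((N - (i + 1) : ℕ) : ℝ) ^ (2 - γ)) * u (i + 1) ^ 2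
        = ∑ i ∈ range N, a (N - 1 - i) * S (i + 1) ^ 2 := by
      refine Finset.sum_congr rfl fun i hi => ?_
      have hi' : i < N := Finset.mem_range.mp hi
      rw [huk]
      congr 1
      have e1 : N - i = (N - 1 - i) + 1 := by omega
      have e2 : N - (i + 1) = N - 1 - i := by omega
      rw [e1, e2, ha]
      push_cast
      ring
    rw [hsum]
    simp only [Nat.sub_self, Nat.sub_zero, Nat.cast_zero, Real.zero_rpow (ne_of_gt hb0),
      zero_mul, add_zero, hu0]
  -- Step 5 : lower bound for the coefficients
  have hlow : (2 - γ) * (N:ℝ) ^ (1 - γ) * (∑ i ∈ range N, S (i + 1) ^ 2)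
      ≤ ∑ i ∈ range N, a (N - 1 - i) * S (i + 1) ^ 2 := by
    rw [Finset.mul_sum]
    refine Finset.sum_le_sum fun i hi => ?_
    have hi' : i < N := Finset.mem_range.mp hi
    have h1 : (N:ℝ) ^ (1 - γ) ≤ (((N - 1 - i : ℕ) : ℝ) + 1) ^ (1 - γ) := by
      refine Real.rpow_le_rpow_of_nonpos (by positivity) ?_ (by linarith)
      have h : (N - 1 - i) + 1 ≤ N := by omega
      exact_mod_cast h
    have h3 : (2 - γ) * (N:ℝ) ^ (1 - γ) ≤ a (N - 1 - i) :=
      le_trans (mul_le_mul_of_nonneg_left h1 hb0.le) (ha_lb (N - 1 - i))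
    exact mul_le_mul_of_nonneg_right h3 (sq_nonneg _)
  -- assemble
  have key : (2 - γ) * (N:ℝ) ^ (1 - γ) * (∑ i ∈ range N, S (i + 1) ^ 2)
        - (N:ℝ) ^ (2 - γ) * P ^ 2
      ≤ 2 * ∑ n ∈ Finset.Icc 1 N,
          (∑ i ∈ range n, a (n - 1 - i) * (u (i + 1) - u i)) * S n := by
    have h1 : ∑ n ∈ Finset.Icc 1 N, ∑ i ∈ range n, a (n - 1 - i) * (u (i + 1) ^ 2 - u i ^ 2)
        ≤ ∑ n ∈ Finset.Icc 1 N,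
            2 * ((∑ i ∈ range n, a (n - 1 - i) * (u (i + 1) - u i)) * S n) :=
      Finset.sum_le_sum hper
    rw [← Finset.mul_sum] at h1
    rw [hswap, habel] at h1
    linarith
  rw [Finset.sum_congr rfl hbracket]
  -- convert the RHS sum
  have hQ : ∑ n ∈ Finset.Icc 1 N, (S n) ^ 2 = ∑ i ∈ range N, S (i + 1) ^ 2 := by
    rw [← Finset.Ico_add_one_right_eq_Icc, Finset.sum_Ico_eq_sum_range]
    simp [add_comm]
  rw [hQ]
  have hC : 0 < τ ^ (1 - γ) / Real.Gamma (3 - γ) :=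
    div_pos (Real.rpow_pos_of_pos hτ _) hΓ3pos
  have hNpos : (0:ℝ) < (N:ℝ) := by exact_mod_cast hN
  have e1 : T ^ (1 - γ) = (N:ℝ) ^ (1 - γ) * τ ^ (1 - γ) := by
    rw [hT, Real.mul_rpow hNpos.le hτ.le]
  have e2 : T ^ (2 - γ) = (N:ℝ) ^ (2 - γ) * (τ ^ (1 - γ) * τ) := by
    rw [hT, Real.mul_rpow hNpos.le hτ.le, ← Real.rpow_add_one (ne_of_gt hτ),
      show (1 - γ) + 1 = 2 - γ by ring]
  have hRHS : T ^ (1 - γ) / (2 * Real.Gamma (2 - γ)) * (∑ i ∈ range N, S (i + 1) ^ 2)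
        - T ^ (2 - γ) / (2 * τ * Real.Gamma (3 - γ)) * P ^ 2
      = τ ^ (1 - γ) / Real.Gamma (3 - γ) *
          (((2 - γ) * (N:ℝ) ^ (1 - γ) * (∑ i ∈ range N, S (i + 1) ^ 2)
            - (N:ℝ) ^ (2 - γ) * P ^ 2) / 2) := by
    rw [e1, e2, hΓ3]
    field_simp
  rw [ge_iff_le, hRHS]
  have := mul_le_mul_of_nonneg_left key hC.le
  linarith
end

section
/- Let (g_0, g_1, g_2, …) be a sequence of real numbers such that g_n ≥ 0 for all n ≥ 0, g_n − g_{n−1} ≤ 0 for all n ≥ 1, and g_{n+1} − 2g_n + g_{n−1} ≥ 0 for all n ≥ 1. Then for every positive integer M and every vector (V_1, …, V_M) ∈ ℝ^M, Σ_{n=1}^{M} (Σ_{p=0}^{n−1} g_p · V_{n−p}) · V_n ≥ 0. -/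
open Finset

private lemma sym_split' (M : ℕ) (F : ℕ → ℕ → ℝ) (hF : ∀ m n, F m n = F n m) :
    2 * ∑ n ∈ Icc 1 M, ∑ m ∈ Icc 1 n, F m n
      = (∑ n ∈ Icc 1 M, ∑ m ∈ Icc 1 M, F m n) + ∑ n ∈ Icc 1 M, F n n := by
  have h1 : ∀ n ∈ Icc 1 M, ∑ m ∈ Icc 1 n, F m n
      = ∑ m ∈ Icc 1 M, if m ≤ n then F m n else 0 := by
    intro n hn
    rw [← Finset.sum_filter]
    congr 1
    ext m
    simp only [mem_filter, mem_Icc] at *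
    omega
  rw [Finset.sum_congr rfl h1]
  have h2 : ∑ n ∈ Icc 1 M, ∑ m ∈ Icc 1 M, (if m ≤ n then F m n else 0)
      = ∑ n ∈ Icc 1 M, ∑ m ∈ Icc 1 M, (if n ≤ m then F m n else 0) := by
    rw [Finset.sum_comm]
    refine Finset.sum_congr rfl fun n _ => Finset.sum_congr rfl fun m _ => ?_
    rw [hF]
  have h3 : ∑ n ∈ Icc 1 M, ∑ m ∈ Icc 1 M,
      ((if m ≤ n then F m n else 0) + (if n ≤ m then F m n else 0))
      = (∑ n ∈ Icc 1 M, ∑ m ∈ Icc 1 M, F m n) + ∑ n ∈ Icc 1 M, F n n := by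
    rw [← Finset.sum_add_distrib]
    refine Finset.sum_congr rfl fun n hn => ?_
    have key : ∀ m, (if m ≤ n then F m n else 0) + (if n ≤ m then F m n else 0)
        = F m n + (if m = n then F m n else 0) := by
      intro m
      by_cases e1 : m ≤ n <;> by_cases e2 : n ≤ m
      · simp [e1, e2, le_antisymm e1 e2]
      · simp [e1, e2, show m ≠ n by omega]
      · simp [e1, e2, show m ≠ n by omega]
      · omega
    rw [Finset.sum_congr rfl fun m _ => key m, Finset.sum_add_distrib,
      Finset.sum_ite_eq' (Icc 1 M) n (fun m => F m n), if_pos hn]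
  have h4 : ∑ n ∈ Icc 1 M, ∑ m ∈ Icc 1 M,
      ((if m ≤ n then F m n else 0) + (if n ≤ m then F m n else 0))
      = (∑ n ∈ Icc 1 M, ∑ m ∈ Icc 1 M, (if m ≤ n then F m n else 0))
        + ∑ n ∈ Icc 1 M, ∑ m ∈ Icc 1 M, (if n ≤ m then F m n else 0) := by
    rw [← Finset.sum_add_distrib]
    exact Finset.sum_congr rfl fun n _ => Finset.sum_add_distrib
  linarith [h2, h3, h4]

private lemma window' (L M : ℕ) (hL : 1 ≤ L) (V : ℕ → ℝ) :
    ∑ j ∈ Icc 1 (M + L - 1),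
        (∑ n ∈ (Icc 1 M).filter (fun n => n ≤ j ∧ j < n + L), V n) ^ 2
      = ∑ n ∈ Icc 1 M, ∑ m ∈ Icc 1 M,
          ((min m n + L - max m n : ℕ) : ℝ) * (V m * V n) := by
  have hexp : ∀ j, (∑ n ∈ (Icc 1 M).filter (fun n => n ≤ j ∧ j < n + L), V n) ^ 2
      = ∑ n ∈ Icc 1 M, ∑ m ∈ Icc 1 M,
          (if (m ≤ j ∧ j < m + L) ∧ (n ≤ j ∧ j < n + L) then V m * V n else 0) := by
    intro j
    rw [sq, Finset.sum_filter, Finset.sum_mul_sum]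
    rw [Finset.sum_comm]
    refine Finset.sum_congr rfl fun n _ => Finset.sum_congr rfl fun m _ => ?_
    by_cases e1 : m ≤ j ∧ j < m + L <;> by_cases e2 : n ≤ j ∧ j < n + L <;>
      simp [e1, e2, mul_comm]
  rw [Finset.sum_congr rfl fun j _ => hexp j]
  rw [Finset.sum_comm]
  refine Finset.sum_congr rfl fun n hn => ?_
  rw [Finset.sum_comm]
  refine Finset.sum_congr rfl fun m hm => ?_
  rw [← Finset.sum_filter]
  have hset : (Icc 1 (M + L - 1)).filter
        (fun j => (m ≤ j ∧ j < m + L) ∧ (n ≤ j ∧ j < n + L))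
      = Icc (max m n) (min m n + L - 1) := by
    simp only [mem_Icc] at hn hm
    ext j
    simp only [mem_filter, mem_Icc, le_max_iff, max_le_iff, le_min_iff, min_le_iff]
    omega
  rw [hset, Finset.sum_const, Nat.card_Icc, nsmul_eq_mul]
  congr 1
  have : min m n + L - 1 + 1 - max m n = min m n + L - max m n := by omega
  rw [this]

private lemma QT_nonneg' (L M : ℕ) (hL : 1 ≤ L) (V : ℕ → ℝ) :
    0 ≤ ∑ n ∈ Icc 1 M, (∑ p ∈ range n, ((L - p : ℕ) : ℝ) * V (n - p)) * V n := by
  set F : ℕ → ℕ → ℝ := fun m n => ((min m n + L - max m n : ℕ) : ℝ) * (V m * V n) with hFdef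
  have hF : ∀ m n, F m n = F n m := by
    intro m n
    simp only [hFdef, min_comm m n, max_comm m n, mul_comm (V m) (V n)]
  have hinner : ∀ n ∈ Icc 1 M,
      (∑ p ∈ range n, ((L - p : ℕ) : ℝ) * V (n - p)) * V n
        = ∑ m ∈ Icc 1 n, F m n := by
    intro n hn
    rw [Finset.sum_mul]
    refine Finset.sum_nbij' (fun p => n - p) (fun m => n - m) ?_ ?_ ?_ ?_ ?_
    · intro p hp; simp only [mem_range, mem_Icc] at *; omega
    · intro m hm; simp only [mem_range, mem_Icc] at *; omega
    · intro p hp; simp only [mem_range] at hp; show n - (n - p) = p; omega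
    · intro m hm; simp only [mem_Icc] at hm; show n - (n - m) = m; omega
    · intro p hp
      simp only [mem_range] at hp
      have h1 : min (n - p) n = n - p := min_eq_left (by omega)
      have h2 : max (n - p) n = n := max_eq_right (by omega)
      simp only [hFdef, h1, h2]
      have h3 : n - p + L - n = L - p := by omega
      rw [h3, mul_assoc]
  rw [Finset.sum_congr rfl hinner]
  have hs := sym_split' M F hF
  have hw := window' L M hL V
  have hfull : 0 ≤ ∑ n ∈ Icc 1 M, ∑ m ∈ Icc 1 M, F m n := by
    rw [← hw]
    exact Finset.sum_nonneg fun j _ => sq_nonneg _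
  have hdiag : 0 ≤ ∑ n ∈ Icc 1 M, F n n := by
    refine Finset.sum_nonneg fun n _ => ?_
    simp only [hFdef, min_self, max_self]
    have : n + L - n = L := by omega
    rw [this, ← sq]
    positivity
  linarith

private lemma Q1_nonneg' (M : ℕ) (V : ℕ → ℝ) :
    0 ≤ ∑ n ∈ Icc 1 M, (∑ p ∈ range n, V (n - p)) * V n := by
  set F : ℕ → ℕ → ℝ := fun m n => V m * V n with hFdef
  have hF : ∀ m n, F m n = F n m := fun m n => mul_comm _ _
  have hinner : ∀ n ∈ Icc 1 M,
      (∑ p ∈ range n, V (n - p)) * V n = ∑ m ∈ Icc 1 n, F m n := by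
    intro n hn
    rw [Finset.sum_mul]
    refine Finset.sum_nbij' (fun p => n - p) (fun m => n - m) ?_ ?_ ?_ ?_ ?_
    · intro p hp; simp only [mem_range, mem_Icc] at *; omega
    · intro m hm; simp only [mem_range, mem_Icc] at *; omega
    · intro p hp; simp only [mem_range] at hp; show n - (n - p) = p; omega
    · intro m hm; simp only [mem_Icc] at hm; show n - (n - m) = m; omega
    · intro p hp; rfl
  rw [Finset.sum_congr rfl hinner]
  have hs := sym_split' M F hF
  have hfull : ∑ n ∈ Icc 1 M, ∑ m ∈ Icc 1 M, F m n
      = (∑ n ∈ Icc 1 M, V n) ^ 2 := by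
    rw [sq, Finset.sum_mul_sum]
    exact Finset.sum_congr rfl fun n _ => Finset.sum_congr rfl fun m _ =>
      mul_comm _ _
  have hdiag : ∑ n ∈ Icc 1 M, F n n = ∑ n ∈ Icc 1 M, (V n) ^ 2 :=
    Finset.sum_congr rfl fun n _ => (sq (V n)) ▸ rfl
  nlinarith [sq_nonneg (∑ n ∈ Icc 1 M, V n), Finset.sum_nonneg
    (fun n (_ : n ∈ Icc 1 M) => sq_nonneg (V n))]

private lemma decomp' (g : ℕ → ℝ) (M : ℕ) (hM : 1 ≤ M) :
    ∀ p, p ≤ M → g p = g M + (g (M-1) - g M) * ((M - p : ℕ) : ℝ)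
      + ∑ i ∈ range (M - 1),
          (g i - 2 * g (i+1) + g (i+2)) * ((i + 1 - p : ℕ) : ℝ) := by
  suffices h : ∀ k, k ≤ M → g (M - k) = g M + (g (M-1) - g M) * ((M - (M - k) : ℕ) : ℝ)
      + ∑ i ∈ range (M - 1),
          (g i - 2 * g (i+1) + g (i+2)) * ((i + 1 - (M - k) : ℕ) : ℝ) by
    intro p hp
    have := h (M - p) (by omega)
    rwa [show M - (M - p) = p by omega] at this
  intro k
  induction k with
  | zero =>
      intro _
      have h1 : (M - (M - 0) : ℕ) = 0 := by omega
      have h2 : ∑ i ∈ range (M - 1),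
          (g i - 2 * g (i+1) + g (i+2)) * ((i + 1 - (M - 0) : ℕ) : ℝ) = 0 := by
        refine Finset.sum_eq_zero fun i hi => ?_
        simp only [mem_range] at hi
        have : (i + 1 - (M - 0) : ℕ) = 0 := by omega
        rw [this]
        simp
      rw [h1, h2]
      simp
  | succ k ih =>
      intro hk1
      have hih := ih (by omega)
      set p := M - (k + 1) with hpdef
      have hp1 : M - k = p + 1 := by omega
      rw [hp1] at hih
      have hc1 : (M - p : ℕ) = k + 1 := by omega
      have hc2 : (M - (p + 1) : ℕ) = k := by omega
      rw [hc2] at hih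
      have hpM : p + (M - 1 - p) = M - 1 := by omega
      have hsum : ∑ i ∈ range (M - 1),
            (g i - 2 * g (i+1) + g (i+2)) * ((i + 1 - p : ℕ) : ℝ)
          = (∑ i ∈ range (M - 1),
              (g i - 2 * g (i+1) + g (i+2)) * ((i + 1 - (p+1) : ℕ) : ℝ))
            + ((g p - g (p+1)) - (g (M-1) - g M)) := by
        rw [hc2] at *
        have step : ∀ i ∈ range (M - 1),
            (g i - 2 * g (i+1) + g (i+2)) * ((i + 1 - p : ℕ) : ℝ)
            = (g i - 2 * g (i+1) + g (i+2)) * ((i + 1 - (p+1) : ℕ) : ℝ)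
              + (if p ≤ i then (g i - g (i+1)) - (g (i+1) - g (i+2)) else 0) := by
          intro i hi
          by_cases hpi : p ≤ i
          · have e1 : (i + 1 - p : ℕ) = (i + 1 - (p+1) : ℕ) + 1 := by omega
            rw [e1, if_pos hpi]
            push_cast
            ring
          · have e1 : (i + 1 - p : ℕ) = 0 := by omega
            have e2 : (i + 1 - (p+1) : ℕ) = 0 := by omega
            rw [e1, e2, if_neg hpi]
            simp
        rw [Finset.sum_congr rfl step, Finset.sum_add_distrib]
        congr 1
        rw [← Finset.sum_filter]
        have hfil : (range (M - 1)).filter (fun i => p ≤ i) = Ico p (M - 1) := by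
          ext i
          simp only [mem_filter, mem_range, mem_Ico]
          omega
        rw [hfil, Finset.sum_Ico_eq_sum_range]
        have tele : ∑ i ∈ range (M - 1 - p),
            ((fun j => g j - g (j+1)) (p + i) - (fun j => g j - g (j+1)) (p + (i + 1)))
            = (g p - g (p+1)) - (g (M-1) - g M) := by
          rw [Finset.sum_range_sub' (fun i => (fun j => g j - g (j+1)) (p + i))]
          simp only []
          rw [add_zero, hpM]
          have h5 : M - 1 + 1 = M := by omega
          rw [h5]
        rw [← tele]
        refine Finset.sum_congr rfl fun i hi => ?_
        simp only []
        have h6 : p + i + 1 = p + (i + 1) := by omega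
        rw [h6]
        have h7 : p + i + 2 = p + (i + 1) + 1 := by omega
        rw [h7]
      rw [hsum, hc1]
      rw [hih]
      push_cast
      ring

/-- Lemma 2.5 (López-Marcos): for a nonnegative, nonincreasing, convex sequence
`g`, the associated quadratic form of the lower-triangular convolution is
nonnegative. -/
theorem convolution_quadratic_form_nonneg
    (g : ℕ → ℝ) (hg0 : ∀ n, 0 ≤ g n)
    (hg1 : ∀ n : ℕ, 1 ≤ n → g n - g (n - 1) ≤ 0)
    (hg2 : ∀ n : ℕ, 1 ≤ n → g (n + 1) - 2 * g n + g (n - 1) ≥ 0)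
    (M : ℕ) (hM : 1 ≤ M) (V : ℕ → ℝ) :
    ∑ n ∈ Finset.Icc 1 M, (∑ p ∈ Finset.range n, g p * V (n - p)) * V n ≥ 0 := by
  have hd : 0 ≤ g (M-1) - g M := by
    have := hg1 M hM
    linarith
  have he : ∀ i, 0 ≤ g i - 2 * g (i+1) + g (i+2) := by
    intro i
    have h := hg2 (i+1) (by omega)
    simp only [Nat.add_sub_cancel] at h
    linarith
  rw [ge_iff_le]
  have hrw : ∀ n ∈ Icc 1 M,
      (∑ p ∈ range n, g p * V (n - p)) * V n
      = g M * ((∑ p ∈ range n, V (n - p)) * V n)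
        + (g (M-1) - g M) * ((∑ p ∈ range n, ((M - p : ℕ) : ℝ) * V (n - p)) * V n)
        + ∑ i ∈ range (M - 1), (g i - 2 * g (i+1) + g (i+2)) *
            ((∑ p ∈ range n, ((i + 1 - p : ℕ) : ℝ) * V (n - p)) * V n) := by
    intro n hn
    simp only [mem_Icc] at hn
    have hg' : ∀ p ∈ range n, g p * V (n - p)
        = g M * V (n - p) + (g (M-1) - g M) * (((M - p : ℕ) : ℝ) * V (n - p))
          + ∑ i ∈ range (M - 1), (g i - 2 * g (i+1) + g (i+2)) *
              (((i + 1 - p : ℕ) : ℝ) * V (n - p)) := by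
      intro p hp
      simp only [mem_range] at hp
      rw [decomp' g M hM p (by omega), add_mul, add_mul, Finset.sum_mul]
      congr 1
      · congr 1
        rw [mul_assoc]
      · exact Finset.sum_congr rfl fun i _ => mul_assoc _ _ _
    rw [Finset.sum_congr rfl hg', Finset.sum_add_distrib, Finset.sum_add_distrib,
      add_mul, add_mul]
    congr 1
    · congr 1
      · rw [← Finset.mul_sum, mul_assoc]
      · rw [← Finset.mul_sum, mul_assoc]
    · rw [Finset.sum_comm, Finset.sum_mul]
      refine Finset.sum_congr rfl fun i _ => ?_
      rw [← Finset.mul_sum, mul_assoc]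
  rw [Finset.sum_congr rfl hrw, Finset.sum_add_distrib, Finset.sum_add_distrib,
    ← Finset.mul_sum, ← Finset.mul_sum]
  have h3 : ∑ n ∈ Icc 1 M, ∑ i ∈ range (M - 1), (g i - 2 * g (i+1) + g (i+2)) *
        ((∑ p ∈ range n, ((i + 1 - p : ℕ) : ℝ) * V (n - p)) * V n)
      = ∑ i ∈ range (M - 1), (g i - 2 * g (i+1) + g (i+2)) *
          ∑ n ∈ Icc 1 M, ((∑ p ∈ range n, ((i + 1 - p : ℕ) : ℝ) * V (n - p)) * V n) := by
    rw [Finset.sum_comm]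
    exact Finset.sum_congr rfl fun i _ => (Finset.mul_sum _ _ _).symm
  rw [h3]
  have t1 := Q1_nonneg' M V
  have t2 := QT_nonneg' M M hM V
  have t3 : 0 ≤ ∑ i ∈ range (M - 1), (g i - 2 * g (i+1) + g (i+2)) *
      ∑ n ∈ Icc 1 M, ((∑ p ∈ range n, ((i + 1 - p : ℕ) : ℝ) * V (n - p)) * V n) := by
    refine Finset.sum_nonneg fun i _ => mul_nonneg (he i) ?_
    exact QT_nonneg' (i + 1) M (by omega) V
  have := mul_nonneg (hg0 M) t1
  have := mul_nonneg hd t2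
  linarith
end

section
/- Let 0 < β < 1 and define d_k^{(β)} = (k+1)^{1−β} − k^{1−β} for integers k ≥ 0. Then for every positive integer N and every vector (v^1, v^2, …, v^N) ∈ ℝ^N, Σ_{n=1}^{N} Σ_{k=1}^{n} d_{n−k}^{(β)} · v^k · v^n ≥ 0. -/
open Finset

private lemma tri_sq (a b : ℕ) (v : ℕ → ℝ) :
    2 * (∑ n ∈ Icc a b, ∑ k ∈ Icc a n, v k * v n) =
      (∑ i ∈ Icc a b, v i) ^ 2 + ∑ i ∈ Icc a b, v i ^ 2 := by
  induction b with
  | zero =>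
    rcases Nat.eq_zero_or_pos a with rfl | ha
    · simp; ring
    · rw [Finset.Icc_eq_empty (by omega)]; simp
  | succ b ih =>
    rcases le_or_gt a (b + 1) with hab | hab
    · rw [Finset.sum_Icc_succ_top hab, Finset.sum_Icc_succ_top hab,
        Finset.sum_Icc_succ_top hab, Finset.sum_Icc_succ_top hab (f := fun i => v i ^ 2)]
      rcases le_or_gt a b with hab' | hab'
      · rw [← Finset.sum_mul]; nlinarith [ih]
      · rw [Finset.Icc_eq_empty (by omega)] at *
        simp at *
        nlinarith [ih]
    · rw [Finset.Icc_eq_empty (by omega)]; simp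

private lemma tri (a b : ℕ) (v : ℕ → ℝ) :
    0 ≤ ∑ n ∈ Icc a b, ∑ k ∈ Icc a n, v k * v n := by
  nlinarith [tri_sq a b v, sq_nonneg (∑ i ∈ Icc a b, v i),
    Finset.sum_nonneg (fun i (_ : i ∈ Icc a b) => sq_nonneg (v i))]

private lemma Qm_nonneg (m N : ℕ) (v : ℕ → ℝ) :
    0 ≤ ∑ n ∈ Icc 1 N, ∑ k ∈ Icc 1 n, ((m + 1 - (n - k) : ℕ) : ℝ) * (v k * v n) := by
  have key : ∀ n ∈ Icc 1 N, ∀ k ∈ Icc 1 n,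
      ((m + 1 - (n - k) : ℕ) : ℝ) * (v k * v n)
        = ∑ t ∈ Icc 1 (N + m), if n ≤ t ∧ t ≤ k + m then v k * v n else 0 := by
    intro n hn k hk
    simp only [Finset.mem_Icc] at hn hk
    have hfil : Finset.filter (fun t => n ≤ t ∧ t ≤ k + m) (Icc 1 (N + m))
        = Icc n (k + m) := by
      ext t; simp only [Finset.mem_filter, Finset.mem_Icc]; omega
    rw [← Finset.sum_filter, hfil, Finset.sum_const, Nat.card_Icc, nsmul_eq_mul]
    congr 2
    omega
  rw [Finset.sum_congr rfl (fun n hn => Finset.sum_congr rfl (fun k hk => key n hn k hk))]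
  have swap1 : ∀ n : ℕ,
      (∑ k ∈ Icc 1 n, ∑ t ∈ Icc 1 (N + m), if n ≤ t ∧ t ≤ k + m then v k * v n else 0)
      = ∑ t ∈ Icc 1 (N + m), ∑ k ∈ Icc 1 n, if n ≤ t ∧ t ≤ k + m then v k * v n else 0 :=
    fun n => Finset.sum_comm
  rw [Finset.sum_congr rfl (fun n _ => swap1 n), Finset.sum_comm]
  apply Finset.sum_nonneg
  intro t _
  set a := max 1 (t - m) with ha
  have hfil2 : ∀ n : ℕ, (Icc 1 n).filter (fun k => n ≤ t ∧ t ≤ k + m)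
      = if n ≤ t then Icc a n else ∅ := by
    intro n
    split
    · ext k; simp only [Finset.mem_filter, Finset.mem_Icc, a, max_le_iff]; omega
    · ext k; simp only [Finset.mem_filter, Finset.mem_Icc, Finset.notMem_empty,
        iff_false, not_and]; omega
  have step1 : ∀ n, (∑ k ∈ Icc 1 n, if n ≤ t ∧ t ≤ k + m then v k * v n else 0)
      = if n ≤ t then ∑ k ∈ Icc a n, v k * v n else 0 := by
    intro n
    rw [← Finset.sum_filter, hfil2 n]
    split <;> simp
  rw [Finset.sum_congr rfl (fun n _ => step1 n), ← Finset.sum_filter]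
  have hfil3 : (Icc 1 N).filter (· ≤ t) = Icc 1 (min N t) := by
    ext n; simp only [Finset.mem_filter, Finset.mem_Icc, le_min_iff]; omega
  rw [hfil3]
  have hsub : Icc a (min N t) ⊆ Icc 1 (min N t) :=
    Finset.Icc_subset_Icc_left (le_max_left _ _)
  have hzero : ∀ n ∈ Icc 1 (min N t), n ∉ Icc a (min N t) →
      (∑ k ∈ Icc a n, v k * v n) = 0 := by
    intro n hn hn'
    simp only [Finset.mem_Icc, le_min_iff, a, max_le_iff, not_and, not_le] at hn hn'
    rw [Finset.Icc_eq_empty, Finset.sum_empty]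
    simp only [a, not_le, lt_max_iff]
    omega
  rw [← Finset.sum_subset hsub hzero]
  exact tri a (min N t) v

private lemma key_decomp (d : ℕ → ℝ) (N j : ℕ) (hj : j < N) :
    d j = d N + ((N - j : ℕ) : ℝ) * (d (N - 1) - d N)
      + ∑ l ∈ Finset.range (N - 1),
          ((l + 1 - j : ℕ) : ℝ) * (d l - 2 * d (l + 1) + d (l + 2)) := by
  set e : ℕ → ℝ := fun x => d x - d (x + 1) with he
  have t1 : ∑ i ∈ range (N - j), e (j + i) = d j - d N := by
    have h := Finset.sum_range_sub' (fun i => d (j + i)) (N - j)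
    simpa [he, show j + (N - j) = N from by omega, ← add_assoc] using h
  have t2 : ∀ i < N - j, ∑ m ∈ range (N - 1 - (j + i)), (e (j + i + m) - e (j + i + m + 1))
      = e (j + i) - e (N - 1) := by
    intro i hi
    have h := Finset.sum_range_sub' (fun m => e (j + i + m)) (N - 1 - (j + i))
    simpa [show j + i + (N - 1 - (j + i)) = N - 1 from by omega, ← add_assoc] using h
  have t3 : ∑ i ∈ range (N - j), (e (j + i) - e (N - 1))
      = (d j - d N) - ((N - j : ℕ) : ℝ) * e (N - 1) := by
    rw [Finset.sum_sub_distrib, t1, Finset.sum_const, Finset.card_range, nsmul_eq_mul]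
  have t6 : ∑ i ∈ range (N - j), ∑ m ∈ range (N - 1 - (j + i)),
        (e (j + i + m) - e (j + i + m + 1))
      = (d j - d N) - ((N - j : ℕ) : ℝ) * e (N - 1) := by
    rw [Finset.sum_congr rfl (fun i hi => t2 i (Finset.mem_range.mp hi))]
    exact t3
  have t4 : ∑ i ∈ range (N - j), ∑ m ∈ range (N - 1 - (j + i)),
        (e (j + i + m) - e (j + i + m + 1))
      = ∑ l ∈ range (N - 1), ((l + 1 - j : ℕ) : ℝ) * (e l - e (l + 1)) := by
    have stepA : ∀ i, (∑ m ∈ range (N - 1 - (j + i)), (e (j + i + m) - e (j + i + m + 1)))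
        = ∑ l ∈ range (N - 1), if j + i ≤ l then e l - e (l + 1) else 0 := by
      intro i
      rw [← Finset.sum_Ico_eq_sum_range (fun l => e l - e (l + 1)) (j + i) (N - 1)]
      rw [← Finset.sum_filter]
      congr 1
      ext l; simp only [Finset.mem_filter, Finset.mem_Ico, Finset.mem_range]; omega
    rw [Finset.sum_congr rfl (fun i _ => stepA i), Finset.sum_comm]
    refine Finset.sum_congr rfl (fun l hl => ?_)
    rw [Finset.mem_range] at hl
    have hfil : (range (N - j)).filter (fun i => j + i ≤ l) = range (l + 1 - j) := by
      ext i; simp only [Finset.mem_filter, Finset.mem_range]; omega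
    rw [← Finset.sum_filter, hfil, Finset.sum_const, Finset.card_range, nsmul_eq_mul]
  have t5 : ∑ l ∈ range (N - 1), ((l + 1 - j : ℕ) : ℝ) * (e l - e (l + 1))
      = ∑ l ∈ range (N - 1), ((l + 1 - j : ℕ) : ℝ) * (d l - 2 * d (l + 1) + d (l + 2)) := by
    refine Finset.sum_congr rfl (fun l _ => ?_)
    simp only [he]
    ring
  have heN : e (N - 1) = d (N - 1) - d N := by
    simp only [he]
    rw [show N - 1 + 1 = N from by omega]
  rw [← t5, ← t4, t6, heN]
  ring

private lemma gconvex (p : ℝ) (hp0 : 0 < p) (hp1 : p < 1) :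
    ConvexOn ℝ (Set.Ici 0) (fun x : ℝ => (x + 1) ^ p - x ^ p) := by
  have hint : interior (Set.Ici (0:ℝ)) = Set.Ioi 0 := interior_Ici
  apply convexOn_of_hasDerivWithinAt2_nonneg (convex_Ici 0)
    (f' := fun x => p * (x + 1) ^ (p - 1) - p * x ^ (p - 1))
    (f'' := fun x => p * (p - 1) * (x + 1) ^ (p - 2) - p * (p - 1) * x ^ (p - 2))
  · apply ContinuousOn.sub
    · exact ((continuous_id.add continuous_const).continuousOn).rpow_const
        (fun x _ => Or.inr hp0.le)
    · exact (continuous_id.continuousOn).rpow_const (fun x _ => Or.inr hp0.le)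
  · intro x hx
    rw [hint] at hx
    have h1 : HasDerivAt (fun y : ℝ => (y + 1) ^ p) (p * (x + 1) ^ (p - 1)) x := by
      have := (Real.hasDerivAt_rpow_const (x := x + 1) (p := p)
        (Or.inl (ne_of_gt (by simp only [Set.mem_Ioi] at hx; linarith : (0:ℝ) < x + 1)))).comp
        x ((hasDerivAt_id x).add_const 1)
      simpa [Function.comp_def] using this
    have h2 : HasDerivAt (fun y : ℝ => y ^ p) (p * x ^ (p - 1)) x :=
      Real.hasDerivAt_rpow_const (Or.inl (ne_of_gt hx))
    exact (h1.sub h2).hasDerivWithinAt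
  · intro x hx
    rw [hint] at hx
    have h1 : HasDerivAt (fun y : ℝ => p * (y + 1) ^ (p - 1))
        (p * ((p - 1) * (x + 1) ^ (p - 1 - 1))) x := by
      have := (Real.hasDerivAt_rpow_const (x := x + 1) (p := p - 1)
        (Or.inl (ne_of_gt (by simp only [Set.mem_Ioi] at hx; linarith : (0:ℝ) < x + 1)))).comp
        x ((hasDerivAt_id x).add_const 1)
      simpa using (this.const_mul p)
    have h2 : HasDerivAt (fun y : ℝ => p * y ^ (p - 1))
        (p * ((p - 1) * x ^ (p - 1 - 1))) x :=
      (Real.hasDerivAt_rpow_const (Or.inl (ne_of_gt hx))).const_mul p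
    have h3 := (h1.sub h2).hasDerivWithinAt (s := interior (Set.Ici (0:ℝ)))
    convert h3 using 1
    · rfl
    · rfl
    · rfl
    · ring_nf
  · intro x hx
    rw [hint] at hx
    have hle : (x + 1) ^ (p - 2) ≤ x ^ (p - 2) :=
      Real.rpow_le_rpow_of_nonpos hx (by linarith) (by linarith)
    have hneg : p * (p - 1) ≤ 0 := by nlinarith
    nlinarith

/-- Lemma 2.6, inequality (16): nonnegativity of the quadratic form built from
the L1 coefficients `d_k^{(β)}`. -/
theorem L1_quadratic_form_nonneg
    (β : ℝ) (hβ0 : 0 < β) (hβ1 : β < 1)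
    (d : ℕ → ℝ) (hd : ∀ k, d k = ((k : ℝ) + 1) ^ (1 - β) - (k : ℝ) ^ (1 - β))
    (N : ℕ) (hN : 1 ≤ N) (v : ℕ → ℝ) :
    ∑ n ∈ Finset.Icc 1 N, ∑ k ∈ Finset.Icc 1 n, d (n - k) * v k * v n ≥ 0 := by
  have hp0 : (0:ℝ) < 1 - β := by linarith
  have hp1 : (1:ℝ) - β < 1 := by linarith
  -- d N ≥ 0
  have hd0 : 0 ≤ d N := by
    rw [hd]
    have := Real.rpow_le_rpow (Nat.cast_nonneg N) (by linarith : (N:ℝ) ≤ (N:ℝ) + 1) hp0.le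
    linarith
  -- d decreasing
  have hmono : ∀ l : ℕ, d (l + 1) ≤ d l := by
    intro l
    have hc := Real.concaveOn_rpow (by linarith : (0:ℝ) ≤ 1 - β) hp1.le
    have h := hc.2 (Set.mem_Ici.mpr (Nat.cast_nonneg l))
      (Set.mem_Ici.mpr (by positivity : (0:ℝ) ≤ (l:ℝ) + 2))
      (by norm_num : (0:ℝ) ≤ 1/2) (by norm_num : (0:ℝ) ≤ 1/2) (by norm_num)
    simp only [smul_eq_mul] at h
    rw [show (1/2 : ℝ) * (l:ℝ) + (1/2) * ((l:ℝ) + 2) = (l:ℝ) + 1 by ring] at h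
    rw [hd l, hd (l + 1)]
    push_cast
    rw [show ((l:ℝ) + 1 + 1) = (l:ℝ) + 2 by ring]
    nlinarith [h]
  have heN : 0 ≤ d (N - 1) - d N := by
    have := hmono (N - 1)
    rw [show N - 1 + 1 = N from by omega] at this
    linarith
  -- convexity of d
  have hconv : ∀ m : ℕ, 0 ≤ d m - 2 * d (m + 1) + d (m + 2) := by
    intro m
    have hg := gconvex (1 - β) hp0 hp1
    have h := hg.2 (Set.mem_Ici.mpr (Nat.cast_nonneg m))
      (Set.mem_Ici.mpr (by positivity : (0:ℝ) ≤ (m:ℝ) + 2))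
      (by norm_num : (0:ℝ) ≤ 1/2) (by norm_num : (0:ℝ) ≤ 1/2) (by norm_num)
    simp only [smul_eq_mul] at h
    rw [show (1/2 : ℝ) * (m:ℝ) + (1/2) * ((m:ℝ) + 2) = (m:ℝ) + 1 by ring] at h
    rw [hd m, hd (m + 1), hd (m + 2)]
    push_cast
    nlinarith [h]
  -- expansion of the kernel
  have expand : ∀ n ∈ Icc 1 N, ∀ k ∈ Icc 1 n,
      d (n - k) * v k * v n
        = d N * (v k * v n)
          + (d (N - 1) - d N) * (((N - 1 + 1 - (n - k) : ℕ) : ℝ) * (v k * v n))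
          + ∑ l ∈ Finset.range (N - 1),
              (d l - 2 * d (l + 1) + d (l + 2)) * (((l + 1 - (n - k) : ℕ) : ℝ) * (v k * v n)) := by
    intro n hn k hk
    simp only [Finset.mem_Icc] at hn hk
    have hjN : n - k < N := by omega
    have hNN : N - 1 + 1 - (n - k) = N - (n - k) := by omega
    rw [hNN]
    calc d (n - k) * v k * v n = d (n - k) * (v k * v n) := by ring
      _ = _ := by
          rw [key_decomp d N (n - k) hjN, add_mul, add_mul, Finset.sum_mul]
          congr 1
          · congr 1
            ring
          · exact Finset.sum_congr rfl (fun l _ => by ring)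
  rw [Finset.sum_congr rfl (fun n hn => Finset.sum_congr rfl (fun k hk => expand n hn k hk))]
  simp only [Finset.sum_add_distrib]
  have term1 : 0 ≤ ∑ n ∈ Icc 1 N, ∑ k ∈ Icc 1 n, d N * (v k * v n) := by
    simp only [← Finset.mul_sum]
    exact mul_nonneg hd0 (tri 1 N v)
  have term2 : 0 ≤ ∑ n ∈ Icc 1 N, ∑ k ∈ Icc 1 n,
      (d (N - 1) - d N) * (((N - 1 + 1 - (n - k) : ℕ) : ℝ) * (v k * v n)) := by
    simp only [← Finset.mul_sum]
    exact mul_nonneg heN (Qm_nonneg (N - 1) N v)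
  have term3 : 0 ≤ ∑ n ∈ Icc 1 N, ∑ k ∈ Icc 1 n, ∑ l ∈ Finset.range (N - 1),
      (d l - 2 * d (l + 1) + d (l + 2)) * (((l + 1 - (n - k) : ℕ) : ℝ) * (v k * v n)) := by
    rw [Finset.sum_congr rfl (fun n _ => Finset.sum_comm), Finset.sum_comm]
    apply Finset.sum_nonneg
    intro l _
    simp only [← Finset.mul_sum]
    exact mul_nonneg (hconv l) (Qm_nonneg l N v)
  linarith
end

section
/- Let 0 < β < 1 and define d_k^{(β)} = (k+1)^{1−β} − k^{1−β} for integers k ≥ 0. Then for every positive integer N and every vector (v^1, v^2, …, v^N) ∈ ℝ^N, Σ_{n=1}^{N} Σ_{k=1}^{n} d_{n−k}^{(β)} · v^k · v^n + Σ_{n=1}^{N} Σ_{k=1}^{n−1} d_{n−1−k}^{(β)} · v^k · v^n ≥ 0. -/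
open Finset

/-- Partial geometric convolution. -/
noncomputable def uGeom (r : ℝ) (v : ℕ → ℝ) (n : ℕ) : ℝ :=
  ∑ k ∈ Finset.Icc 1 n, r ^ (n - k) * v k

lemma uGeom_zero (r : ℝ) (v : ℕ → ℝ) : uGeom r v 0 = 0 := by simp [uGeom]

lemma uGeom_succ (r : ℝ) (v : ℕ → ℝ) (n : ℕ) :
    uGeom r v (n + 1) = r * uGeom r v n + v (n + 1) := by
  rw [uGeom, Finset.sum_Icc_succ_top (by omega : 1 ≤ n + 1)]
  simp only [Nat.sub_self, pow_zero, one_mul]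
  rw [uGeom, Finset.mul_sum]
  congr 1
  refine Finset.sum_congr rfl fun k hk => ?_
  simp only [Finset.mem_Icc] at hk
  rw [← mul_assoc, ← pow_succ']
  congr 2
  omega

lemma geom_partial (r : ℝ) (hr0 : 0 ≤ r) (hr1 : r ≤ 1) (v : ℕ → ℝ) (N : ℕ) :
    (1 + r) / 2 * (uGeom r v N) ^ 2 ≤
      ∑ n ∈ Finset.Icc 1 N, (uGeom r v n + uGeom r v (n - 1)) * v n := by
  induction N with
  | zero => simp [uGeom_zero]
  | succ N ih =>
      rw [Finset.sum_Icc_succ_top (by omega : 1 ≤ N + 1)]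
      have h1 : uGeom r v (N + 1) = r * uGeom r v N + v (N + 1) := uGeom_succ r v N
      have h2 : (N + 1 : ℕ) - 1 = N := by omega
      rw [h2]
      have hv : v (N + 1) = uGeom r v (N + 1) - r * uGeom r v N := by linarith
      rw [hv]
      have h1r : (0:ℝ) ≤ 1 - r := by linarith
      nlinarith [sq_nonneg (uGeom r v (N + 1) + uGeom r v N), mul_nonneg h1r (sq_nonneg (uGeom r v (N + 1) + uGeom r v N))]

lemma geom_quad_nonneg (r : ℝ) (hr0 : 0 ≤ r) (hr1 : r ≤ 1) (N : ℕ) (v : ℕ → ℝ) :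
    0 ≤ (∑ n ∈ Finset.Icc 1 N, ∑ k ∈ Finset.Icc 1 n, r ^ (n - k) * v k * v n)
      + ∑ n ∈ Finset.Icc 1 N, ∑ k ∈ Finset.Icc 1 (n - 1), r ^ (n - 1 - k) * v k * v n := by
  have key : ∀ n, (∑ k ∈ Finset.Icc 1 n, r ^ (n - k) * v k * v n) = uGeom r v n * v n := by
    intro n; rw [uGeom, Finset.sum_mul]
  have key2 : ∀ n, (∑ k ∈ Finset.Icc 1 (n - 1), r ^ (n - 1 - k) * v k * v n)
      = uGeom r v (n - 1) * v n := by
    intro n; rw [uGeom, Finset.sum_mul]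
  simp only [key, key2]
  rw [← Finset.sum_add_distrib]
  have := geom_partial r hr0 hr1 v N
  have h2 : ∀ n, uGeom r v n * v n + uGeom r v (n - 1) * v n
      = (uGeom r v n + uGeom r v (n - 1)) * v n := fun n => by ring
  simp only [h2]
  nlinarith [sq_nonneg (uGeom r v N)]


open MeasureTheory Real Set

/-- The kernel whose Laplace transform gives the L1 coefficients. -/
noncomputable def wKer (β : ℝ) (x : ℝ) : ℝ :=
  (1 - β) / Real.Gamma β * (x ^ (β - 2) * (1 - Real.exp (-x)))

lemma wKer_nonneg {β : ℝ} (hβ0 : 0 < β) (hβ1 : β < 1) {x : ℝ} (hx : 0 < x) :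
    0 ≤ wKer β x := by
  have h1 : 0 < Real.Gamma β := Real.Gamma_pos_of_pos hβ0
  have h2 : Real.exp (-x) ≤ 1 := by
    rw [← Real.exp_zero]; exact Real.exp_le_exp.mpr (by linarith)
  have h3 : (0:ℝ) ≤ x ^ (β - 2) := Real.rpow_nonneg hx.le _
  have h5 : 0 ≤ (1 - β) / Real.Gamma β := div_nonneg (by linarith) h1.le
  have h4 : 0 ≤ 1 - Real.exp (-x) := by linarith
  exact mul_nonneg h5 (mul_nonneg h3 h4)

/-- The Fubini package: the 2-variable integrand is integrable on the product. -/
lemma fubini_integrable {β : ℝ} (hβ0 : 0 < β) (hβ1 : β < 1) (m : ℕ) :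
    Integrable (Function.uncurry fun (t : ℝ) (x : ℝ) => x ^ (β - 1) * Real.exp (-(t * x)))
      ((volume.restrict (Ioc (m : ℝ) (m + 1))).prod (volume.restrict (Ioi (0:ℝ)))) := by
  have hmeas : AEStronglyMeasurable
      (Function.uncurry fun (t : ℝ) (x : ℝ) => x ^ (β - 1) * Real.exp (-(t * x)))
      ((volume.restrict (Ioc (m : ℝ) (m + 1))).prod (volume.restrict (Ioi (0:ℝ)))) := by
    apply Measurable.aestronglyMeasurable
    fun_prop
  rw [MeasureTheory.integrable_prod_iff hmeas]
  simp only [Function.uncurry_apply_pair]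
  constructor
  · filter_upwards [ae_restrict_mem measurableSet_Ioc] with t ht
    have ht0 : 0 < t := lt_of_le_of_lt (Nat.cast_nonneg m) ht.1
    have := integrableOn_rpow_mul_exp_neg_mul_rpow
      (by linarith : (-1:ℝ) < β - 1) (one_pos : (0:ℝ) < 1) ht0
    refine this.congr_fun (fun x hx => ?_) measurableSet_Ioi
    simp only [Real.rpow_one]
    ring_nf
  · -- integral of norms: equals Gamma β * t ^ (-β)
    have hcongr : ∀ t ∈ Ioc (m:ℝ) (m+1),
        (∫ x in Ioi (0:ℝ), ‖x ^ (β - 1) * Real.exp (-(t * x))‖)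
          = Real.Gamma β * t ^ (-β) := by
      intro t ht
      have ht0 : 0 < t := lt_of_le_of_lt (Nat.cast_nonneg m) ht.1
      have h1 : ∀ x ∈ Ioi (0:ℝ), ‖x ^ (β - 1) * Real.exp (-(t * x))‖
          = x ^ (β - 1) * Real.exp (-(t * x)) := by
        intro x hx
        have hx0 : (0:ℝ) < x := hx
        rw [Real.norm_eq_abs, abs_of_nonneg]
        positivity
      rw [setIntegral_congr_fun measurableSet_Ioi h1,
        Real.integral_rpow_mul_exp_neg_mul_Ioi hβ0 ht0,
        Real.rpow_neg ht0.le, one_div, Real.inv_rpow ht0.le]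
      ring
    have hint : IntegrableOn (fun t : ℝ => Real.Gamma β * t ^ (-β)) (Ioc (m:ℝ) (m+1)) := by
      have : IntervalIntegrable (fun t : ℝ => t ^ (-β)) volume (m:ℝ) (m+1) :=
        intervalIntegral.intervalIntegrable_rpow' (by linarith)
      rw [intervalIntegrable_iff_integrableOn_Ioc_of_le (by linarith : (m:ℝ) ≤ m+1)] at this
      exact this.const_mul _
    refine hint.congr_fun ?_ measurableSet_Ioc
    intro t ht
    exact (hcongr t ht).symm

lemma inner_t_integral (m : ℕ) {x : ℝ} (hx : 0 < x) :
    ∫ t in Ioc (m:ℝ) (m+1), Real.exp (-(t * x))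
      = (Real.exp (-((m:ℝ) * x)) - Real.exp (-(((m:ℝ)+1) * x))) / x := by
  have hle : (m:ℝ) ≤ (m:ℝ) + 1 := by linarith
  rw [← intervalIntegral.integral_of_le hle]
  have hd : ∀ t : ℝ, HasDerivAt (fun t : ℝ => Real.exp (-(t * x)) / (-x))
      (Real.exp (-(t * x))) t := by
    intro t
    have h1 : HasDerivAt (fun t : ℝ => -(t * x)) (-x) t := by
      simpa using ((hasDerivAt_id t).mul_const x).fun_neg
    have h2 := (Real.hasDerivAt_exp (-(t * x))).comp t h1
    have h3 := h2.div_const (-x)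
    rw [mul_div_assoc, div_self (neg_ne_zero.mpr hx.ne'), mul_one] at h3
    exact h3
  rw [intervalIntegral.integral_eq_sub_of_hasDerivAt (fun t _ => hd t)
    ((Real.continuous_exp.comp (by fun_prop)).intervalIntegrable _ _)]
  ring

lemma inner_eq {β : ℝ} (hβ0 : 0 < β) (hβ1 : β < 1) (m : ℕ) {x : ℝ} (hx : 0 < x) :
    ∫ t in Ioc (m:ℝ) (m+1), x ^ (β - 1) * Real.exp (-(t * x))
      = Real.Gamma β / (1 - β) * (wKer β x * Real.exp (-((m:ℝ) * x))) := by
  rw [MeasureTheory.integral_const_mul, inner_t_integral m hx, wKer]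
  have hG : 0 < Real.Gamma β := Real.Gamma_pos_of_pos hβ0
  have key : x ^ (β - 1) = x ^ (β - 2) * x := by
    rw [show β - 1 = (β - 2) + 1 by ring, Real.rpow_add hx, Real.rpow_one]
  have hexp : Real.exp (-(((m:ℝ) + 1) * x)) = Real.exp (-x) * Real.exp (-((m:ℝ) * x)) := by
    rw [← Real.exp_add]; ring_nf
  rw [key, hexp]
  have hβ' : (1:ℝ) - β ≠ 0 := by linarith
  field_simp

lemma wKer_laplace {β : ℝ} (hβ0 : 0 < β) (hβ1 : β < 1) (m : ℕ) :
    ∫ x in Ioi (0:ℝ), wKer β x * Real.exp (-((m:ℝ) * x))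
      = ((m:ℝ) + 1) ^ (1 - β) - (m:ℝ) ^ (1 - β) := by
  have hG : 0 < Real.Gamma β := Real.Gamma_pos_of_pos hβ0
  have hβ' : (1:ℝ) - β ≠ 0 := by linarith
  have swap := MeasureTheory.integral_integral_swap (fubini_integrable hβ0 hβ1 m)
  -- LHS of swap
  have hL : (∫ t in Ioc (m:ℝ) (m+1), ∫ x in Ioi (0:ℝ), x ^ (β - 1) * Real.exp (-(t * x)))
      = Real.Gamma β / (1 - β) * (((m:ℝ) + 1) ^ (1 - β) - (m:ℝ) ^ (1 - β)) := by
    have h1 : ∀ t ∈ Ioc (m:ℝ) (m+1),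
        (∫ x in Ioi (0:ℝ), x ^ (β - 1) * Real.exp (-(t * x)))
          = Real.Gamma β * t ^ (-β) := by
      intro t ht
      have ht0 : 0 < t := lt_of_le_of_lt (Nat.cast_nonneg m) ht.1
      rw [Real.integral_rpow_mul_exp_neg_mul_Ioi hβ0 ht0,
        Real.rpow_neg ht0.le, one_div, Real.inv_rpow ht0.le]
      ring
    rw [setIntegral_congr_fun measurableSet_Ioc h1, MeasureTheory.integral_const_mul,
      ← intervalIntegral.integral_of_le (by linarith : (m:ℝ) ≤ (m:ℝ)+1),
      integral_rpow (Or.inl (by linarith : (-1:ℝ) < -β))]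
    rw [show -β + 1 = 1 - β by ring]
    field_simp
  -- RHS of swap
  have hR : (∫ x in Ioi (0:ℝ), ∫ t in Ioc (m:ℝ) (m+1), x ^ (β - 1) * Real.exp (-(t * x)))
      = Real.Gamma β / (1 - β) * ∫ x in Ioi (0:ℝ), wKer β x * Real.exp (-((m:ℝ) * x)) := by
    rw [setIntegral_congr_fun measurableSet_Ioi
      (fun x hx => inner_eq hβ0 hβ1 m (hx : (0:ℝ) < x)), MeasureTheory.integral_const_mul]
  rw [hL, hR] at swap
  have hne : Real.Gamma β / (1 - β) ≠ 0 := div_ne_zero (ne_of_gt hG) hβ'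
  exact (mul_left_cancel₀ hne swap).symm

lemma wKer_exp_integrable {β : ℝ} (hβ0 : 0 < β) (hβ1 : β < 1) (m : ℕ) :
    IntegrableOn (fun x => wKer β x * Real.exp (-((m:ℝ) * x))) (Ioi (0:ℝ)) := by
  have hG : 0 < Real.Gamma β := Real.Gamma_pos_of_pos hβ0
  have hβ' : (1:ℝ) - β ≠ 0 := by linarith
  have h : IntegrableOn
      (fun x : ℝ => ∫ t in Ioc (m:ℝ) (m+1), x ^ (β - 1) * Real.exp (-(t * x))) (Ioi 0) := by
    have h0 := (fubini_integrable hβ0 hβ1 m).swap.integral_prod_left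
    simp only [Function.uncurry_apply_pair, Function.comp, Prod.swap] at h0
    exact h0
  refine IntegrableOn.congr_fun (h.const_mul ((1 - β) / Real.Gamma β)) ?_ measurableSet_Ioi
  intro x hx
  show (1 - β) / Real.Gamma β * (∫ t in Ioc (m:ℝ) (m+1), x ^ (β - 1) * Real.exp (-(t * x)))
      = wKer β x * Real.exp (-((m:ℝ) * x))
  rw [inner_eq hβ0 hβ1 m (hx : (0:ℝ) < x)]
  field_simp



open MeasureTheory Real Set in
/-- Lemma 2.6, inequality (17): nonnegativity of the averaged quadratic form
built from the L1 coefficients `d_k^{(β)}`. -/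
theorem L1_averaged_quadratic_form_nonneg
    (β : ℝ) (hβ0 : 0 < β) (hβ1 : β < 1)
    (d : ℕ → ℝ) (hd : ∀ k, d k = ((k : ℝ) + 1) ^ (1 - β) - (k : ℝ) ^ (1 - β))
    (N : ℕ) (hN : 1 ≤ N) (v : ℕ → ℝ) :
    (∑ n ∈ Finset.Icc 1 N, ∑ k ∈ Finset.Icc 1 n, d (n - k) * v k * v n)
      + ∑ n ∈ Finset.Icc 1 N, ∑ k ∈ Finset.Icc 1 (n - 1), d (n - 1 - k) * v k * v n
      ≥ 0 := by
  rw [ge_iff_le]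
  have hpow : ∀ (m : ℕ) (x : ℝ), Real.exp (-x) ^ m = Real.exp (-((m:ℝ) * x)) := by
    intro m x
    rw [← Real.exp_nat_mul]
    congr 1
    ring
  have hIntm : ∀ m : ℕ, MeasureTheory.Integrable (fun x => wKer β x * Real.exp (-x) ^ m)
      (volume.restrict (Ioi (0:ℝ))) := by
    intro m
    simp only [hpow]
    exact wKer_exp_integrable hβ0 hβ1 m
  have hval : ∀ m : ℕ, ∫ x in Ioi (0:ℝ), wKer β x * Real.exp (-x) ^ m = d m := by
    intro m
    simp only [hpow]
    rw [wKer_laplace hβ0 hβ1 m, hd m]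
  have hInt2 : ∀ (m : ℕ) (a b : ℝ), MeasureTheory.Integrable
      (fun x => wKer β x * Real.exp (-x) ^ m * a * b) (volume.restrict (Ioi (0:ℝ))) :=
    fun m a b => ((hIntm m).mul_const a).mul_const b
  have hterm : ∀ (m : ℕ) (a b : ℝ), d m * a * b
      = ∫ x in Ioi (0:ℝ), wKer β x * Real.exp (-x) ^ m * a * b := by
    intro m a b
    rw [MeasureTheory.integral_mul_const, MeasureTheory.integral_mul_const, hval m]
  have e1 : (∑ n ∈ Finset.Icc 1 N, ∑ k ∈ Finset.Icc 1 n, d (n - k) * v k * v n)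
      = ∫ x in Ioi (0:ℝ), ∑ n ∈ Finset.Icc 1 N, ∑ k ∈ Finset.Icc 1 n,
          wKer β x * Real.exp (-x) ^ (n - k) * v k * v n := by
    rw [MeasureTheory.integral_finset_sum _ (fun n _ =>
      MeasureTheory.integrable_finset_sum _ (fun k _ => hInt2 (n - k) (v k) (v n)))]
    refine Finset.sum_congr rfl fun n _ => ?_
    rw [MeasureTheory.integral_finset_sum _ (fun k _ => hInt2 (n - k) (v k) (v n))]
    exact Finset.sum_congr rfl fun k _ => hterm _ _ _
  have e2 : (∑ n ∈ Finset.Icc 1 N, ∑ k ∈ Finset.Icc 1 (n - 1), d (n - 1 - k) * v k * v n)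
      = ∫ x in Ioi (0:ℝ), ∑ n ∈ Finset.Icc 1 N, ∑ k ∈ Finset.Icc 1 (n - 1),
          wKer β x * Real.exp (-x) ^ (n - 1 - k) * v k * v n := by
    rw [MeasureTheory.integral_finset_sum _ (fun n _ =>
      MeasureTheory.integrable_finset_sum _ (fun k _ => hInt2 (n - 1 - k) (v k) (v n)))]
    refine Finset.sum_congr rfl fun n _ => ?_
    rw [MeasureTheory.integral_finset_sum _ (fun k _ => hInt2 (n - 1 - k) (v k) (v n))]
    exact Finset.sum_congr rfl fun k _ => hterm _ _ _
  rw [e1, e2, ← MeasureTheory.integral_add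
    (MeasureTheory.integrable_finset_sum _ (fun n _ =>
      MeasureTheory.integrable_finset_sum _ (fun k _ => hInt2 (n - k) (v k) (v n))))
    (MeasureTheory.integrable_finset_sum _ (fun n _ =>
      MeasureTheory.integrable_finset_sum _ (fun k _ => hInt2 (n - 1 - k) (v k) (v n))))]
  refine MeasureTheory.setIntegral_nonneg measurableSet_Ioi fun x hx => ?_
  have hx0 : (0:ℝ) < x := hx
  have hw := wKer_nonneg hβ0 hβ1 hx0
  have hr1 : Real.exp (-x) ≤ 1 := by
    rw [← Real.exp_zero]; exact Real.exp_le_exp.mpr (by linarith)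
  have hq := geom_quad_nonneg (Real.exp (-x)) (Real.exp_pos _).le hr1 N v
  have hfac : (∑ n ∈ Finset.Icc 1 N, ∑ k ∈ Finset.Icc 1 n,
        wKer β x * Real.exp (-x) ^ (n - k) * v k * v n)
      + (∑ n ∈ Finset.Icc 1 N, ∑ k ∈ Finset.Icc 1 (n - 1),
        wKer β x * Real.exp (-x) ^ (n - 1 - k) * v k * v n)
      = wKer β x * ((∑ n ∈ Finset.Icc 1 N, ∑ k ∈ Finset.Icc 1 n,
          Real.exp (-x) ^ (n - k) * v k * v n)
        + ∑ n ∈ Finset.Icc 1 N, ∑ k ∈ Finset.Icc 1 (n - 1),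
          Real.exp (-x) ^ (n - 1 - k) * v k * v n) := by
    rw [mul_add, Finset.mul_sum, Finset.mul_sum]
    congr 1 <;>
      · refine Finset.sum_congr rfl fun n _ => ?_
        rw [Finset.mul_sum]
        exact Finset.sum_congr rfl fun k _ => by ring
  rw [hfac]
  exact mul_nonneg hw hq
end

section
/- Let 0 < β < 1 and define d_k^{(β)} = (k+1)^{1−β} − k^{1−β} for integers k ≥ 0. For a positive integer N, let H_N be the N×N real symmetric Toeplitz matrix with entries (H_N)_{nn} = d_0^{(β)} for 1 ≤ n ≤ N and (H_N)_{nk} = (d_{|n−k|−1}^{(β)} + d_{|n−k|}^{(β)})/2 for n ≠ k. Then H_N is positive definite. -/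
open MeasureTheory Real Finset Set

namespace ToeplitzPD

noncomputable def phi (β a s : ℝ) : ℝ := s ^ (β - 2) * (1 - Real.exp (-(a * s)))

lemma contOn_phi (β a : ℝ) : ContinuousOn (phi β a) (Ioi (0:ℝ)) := by
  apply ContinuousOn.mul
  · intro s hs
    exact (Real.continuousAt_rpow_const s (β-2) (Or.inl (ne_of_gt hs))).continuousWithinAt
  · fun_prop

lemma integrableOn_phi {β : ℝ} (hβ0 : 0 < β) (hβ1 : β < 1) {a : ℝ} (ha : 0 ≤ a) :
    IntegrableOn (phi β a) (Ioi (0:ℝ)) := by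
  have h1 : IntegrableOn (phi β a) (Ioc (0:ℝ) 1) := by
    have hg : IntegrableOn (fun s : ℝ => a * s ^ (β - 1)) (Ioc (0:ℝ) 1) := by
      apply Integrable.const_mul
      have h := intervalIntegral.intervalIntegrable_rpow' (a := 0) (b := 1)
        (r := β - 1) (by linarith)
      rwa [intervalIntegrable_iff_integrableOn_Ioc_of_le zero_le_one] at h
    refine Integrable.mono' hg ((contOn_phi β a).mono Ioc_subset_Ioi_self
      |>.aestronglyMeasurable measurableSet_Ioc) ?_
    refine (ae_restrict_iff' measurableSet_Ioc).2 (.of_forall fun s hs => ?_)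
    have hs0 : 0 < s := hs.1
    simp only [phi, Real.norm_eq_abs]
    have he1 : Real.exp (-(a*s)) ≤ 1 := Real.exp_le_one_iff.2 (by nlinarith)
    have he2 : 1 - a*s ≤ Real.exp (-(a*s)) := by
      have := Real.add_one_le_exp (-(a*s)); linarith
    have hp : (0:ℝ) ≤ s ^ (β-2) := Real.rpow_nonneg hs0.le _
    rw [abs_of_nonneg (by nlinarith)]
    calc s ^ (β-2) * (1 - Real.exp (-(a*s))) ≤ s ^ (β-2) * (a * s) := by nlinarith
    _ = a * (s ^ (β-2) * s ^ (1:ℝ)) := by rw [Real.rpow_one]; ring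
    _ = a * s ^ (β-1) := by
        rw [← Real.rpow_add hs0, show β - 2 + 1 = β - 1 by ring]
  have h2 : IntegrableOn (phi β a) (Ioi (1:ℝ)) := by
    refine Integrable.mono' (integrableOn_Ioi_rpow_of_lt (by linarith : β - 2 < -1) one_pos)
      ((contOn_phi β a).mono (Ioi_subset_Ioi zero_le_one)
        |>.aestronglyMeasurable measurableSet_Ioi) ?_
    refine (ae_restrict_iff' measurableSet_Ioi).2 (.of_forall fun s hs => ?_)
    have hs0 : (0:ℝ) < s := lt_trans one_pos hs
    simp only [phi, Real.norm_eq_abs]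
    have he1 : Real.exp (-(a*s)) ≤ 1 := Real.exp_le_one_iff.2 (by nlinarith)
    have he3 : 0 < Real.exp (-(a*s)) := Real.exp_pos _
    have hp : (0:ℝ) ≤ s ^ (β-2) := Real.rpow_nonneg hs0.le _
    rw [abs_of_nonneg (by nlinarith)]
    nlinarith
  have := h1.union h2
  rwa [Ioc_union_Ioi_eq_Ioi zero_le_one] at this

lemma integral_phi_scale {β : ℝ} (hβ0 : 0 < β) (hβ1 : β < 1) {a : ℝ} (ha : 0 ≤ a) :
    ∫ s in Ioi (0:ℝ), phi β a s = a ^ (1 - β) * ∫ s in Ioi (0:ℝ), phi β 1 s := by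
  rcases eq_or_lt_of_le ha with rfl | ha
  · simp [phi, Real.zero_rpow (by linarith : (1:ℝ) - β ≠ 0)]
  · have key : ∀ s ∈ Ioi (0:ℝ), phi β a s = a ^ ((2:ℝ) - β) * phi β 1 (a * s) := by
      intro s hs
      have hs0 : (0:ℝ) < s := hs
      simp only [phi, one_mul]
      rw [Real.mul_rpow ha.le hs0.le, ← mul_assoc, ← mul_assoc, ← Real.rpow_add ha]
      norm_num
    rw [setIntegral_congr_fun measurableSet_Ioi key, integral_const_mul,
      integral_comp_mul_left_Ioi (phi β 1) 0 ha, mul_zero, smul_eq_mul]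
    rw [← mul_assoc, ← Real.rpow_neg_one a, ← Real.rpow_add ha,
      show (2:ℝ) - β + -1 = 1 - β by ring]

end ToeplitzPD




namespace ToeplitzPD

noncomputable def Y (r : ℝ) (N : ℕ) (x : ℕ → ℝ) (t : ℕ) : ℝ :=
  ∑ n ∈ Finset.Ico t N, r ^ (n - t) * x n

noncomputable def cf (r : ℝ) (t n : ℕ) : ℝ := if t ≤ n then r ^ (n - t) else 0

lemma Y_of_ge (r : ℝ) (N : ℕ) (x : ℕ → ℝ) {t : ℕ} (ht : N ≤ t) : Y r N x t = 0 := by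
  simp [Y, Finset.Ico_eq_empty_of_le ht]

lemma Y_rec (r : ℝ) (N : ℕ) (x : ℕ → ℝ) {t : ℕ} (ht : t < N) :
    Y r N x t = x t + r * Y r N x (t + 1) := by
  unfold Y
  rw [Finset.sum_eq_sum_Ico_succ_bot ht, Nat.sub_self, pow_zero, one_mul, Finset.mul_sum]
  congr 1
  apply Finset.sum_congr rfl
  intro n hn
  rw [Finset.mem_Ico] at hn
  rw [show n - t = (n - (t+1)) + 1 by omega, pow_succ]
  ring

lemma Y_eq_sum_cf (r : ℝ) (N : ℕ) (x : ℕ → ℝ) (t : ℕ) :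
    Y r N x t = ∑ n ∈ range N, cf r t n * x n := by
  have hset : Finset.Ico t N = (range N).filter (fun n => t ≤ n) := by
    ext a
    simp only [Finset.mem_Ico, Finset.mem_filter, Finset.mem_range]
    omega
  rw [Y, hset, Finset.sum_filter]
  apply Finset.sum_congr rfl
  intro n _
  rw [cf, ite_mul, zero_mul]

lemma coeff_aux (r : ℝ) {N n k : ℕ} (hn : n < N) (hkn : k ≤ n) :
    cf r 0 n * cf r 0 k + (1 - r^2) * ∑ t ∈ range (N-1), cf r (t+1) n * cf r (t+1) k
      = r ^ (n - k) := by
  have h1 : ∀ t ∈ range (N-1), cf r (t+1) n * cf r (t+1) k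
      = if t + 1 ≤ k then r ^ (n - (t+1)) * r ^ (k - (t+1)) else 0 := by
    intro t _
    unfold cf
    by_cases h : t + 1 ≤ k
    · rw [if_pos h, if_pos (le_trans h hkn), if_pos h]
    · rw [if_neg h, mul_zero, if_neg h]
  rw [Finset.sum_congr rfl h1, Finset.sum_ite, Finset.sum_const_zero, add_zero]
  have hset : (range (N-1)).filter (fun t => t + 1 ≤ k) = range k := by
    ext a
    simp only [Finset.mem_filter, Finset.mem_range]
    omega
  rw [hset]
  have h2 : (1 - r^2) * ∑ t ∈ range k, r ^ (n - (t+1)) * r ^ (k - (t+1))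
      = ∑ t ∈ range k, ((fun t => r ^ (n + k - 2*t)) (t+1) - (fun t => r ^ (n + k - 2*t)) t) := by
    rw [Finset.mul_sum]
    apply Finset.sum_congr rfl
    intro t ht
    rw [Finset.mem_range] at ht
    simp only
    rw [← pow_add, show n - (t+1) + (k - (t+1)) = n + k - 2*(t+1) by omega]
    rw [show n + k - 2*t = (n + k - 2*(t+1)) + 2 by omega, pow_add]
    ring
  rw [h2, Finset.sum_range_sub (fun t => r ^ (n + k - 2*t))]
  unfold cf
  rw [if_pos (Nat.zero_le n), if_pos (Nat.zero_le k)]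
  simp only [Nat.sub_zero, Nat.mul_zero]
  rw [← pow_add, show n + k - 2*k = n - k by omega]
  ring

lemma coeff_eq (r : ℝ) {N n k : ℕ} (hn : n < N) (hk : k < N) :
    r ^ (Nat.dist n k)
      = cf r 0 n * cf r 0 k
        + (1 - r^2) * ∑ t ∈ range (N-1), cf r (t+1) n * cf r (t+1) k := by
  rcases le_total k n with h | h
  · rw [Nat.dist_eq_sub_of_le_right h, ← coeff_aux r hn h]
  · rw [Nat.dist_eq_sub_of_le h, ← coeff_aux r hk h]
    simp only [mul_comm (cf r _ n) (cf r _ k)]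

end ToeplitzPD

namespace ToeplitzPD
open Finset

lemma identA (r : ℝ) (N : ℕ) (x : ℕ → ℝ) :
    ∑ n ∈ range N, ∑ k ∈ range N, x n * x k * r ^ (Nat.dist n k)
      = (Y r N x 0)^2 + (1 - r^2) * ∑ t ∈ range (N-1), (Y r N x (t+1))^2 := by
  have hsq : ∀ t, (Y r N x t)^2
      = ∑ n ∈ range N, ∑ k ∈ range N, (cf r t n * cf r t k) * (x n * x k) := by
    intro t
    rw [sq, Y_eq_sum_cf, Finset.sum_mul_sum]
    refine Finset.sum_congr rfl fun n _ => Finset.sum_congr rfl fun k _ => by ring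
  rw [hsq]
  have h2 : (1 - r^2) * ∑ t ∈ range (N-1), (Y r N x (t+1))^2
      = ∑ n ∈ range N, ∑ k ∈ range N,
          ((1 - r^2) * ∑ t ∈ range (N-1), cf r (t+1) n * cf r (t+1) k) * (x n * x k) := by
    calc (1 - r^2) * ∑ t ∈ range (N-1), (Y r N x (t+1))^2
        = ∑ t ∈ range (N-1), ∑ n ∈ range N, ∑ k ∈ range N,
            (1 - r^2) * ((cf r (t+1) n * cf r (t+1) k) * (x n * x k)) := by
          rw [Finset.mul_sum]
          refine Finset.sum_congr rfl fun t _ => ?_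
          rw [hsq, Finset.mul_sum]
          refine Finset.sum_congr rfl fun n _ => ?_
          rw [Finset.mul_sum]
      _ = ∑ n ∈ range N, ∑ k ∈ range N, ∑ t ∈ range (N-1),
            (1 - r^2) * ((cf r (t+1) n * cf r (t+1) k) * (x n * x k)) := by
          rw [Finset.sum_comm]
          refine Finset.sum_congr rfl fun n _ => ?_
          rw [Finset.sum_comm]
      _ = ∑ n ∈ range N, ∑ k ∈ range N,
            ((1 - r^2) * ∑ t ∈ range (N-1), cf r (t+1) n * cf r (t+1) k) * (x n * x k) := by
          refine Finset.sum_congr rfl fun n _ => Finset.sum_congr rfl fun k _ => ?_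
          rw [Finset.mul_sum, Finset.sum_mul]
          refine Finset.sum_congr rfl fun t _ => by ring
  rw [h2, ← Finset.sum_add_distrib]
  refine Finset.sum_congr rfl fun n hn => ?_
  rw [← Finset.sum_add_distrib]
  refine Finset.sum_congr rfl fun k hk => ?_
  rw [Finset.mem_range] at hn hk
  rw [← add_mul, ← coeff_eq r hn hk]
  ring

lemma expand_sq_sum (c : ℝ) (f g : ℕ → ℝ) (s : Finset ℕ) :
    ∑ t ∈ s, (f t + c * g t)^2
      = ∑ t ∈ s, (f t)^2 + c^2 * ∑ t ∈ s, (g t)^2 + 2*c*∑ t ∈ s, f t * g t := by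
  rw [Finset.mul_sum, Finset.mul_sum, ← Finset.sum_add_distrib, ← Finset.sum_add_distrib]
  exact Finset.sum_congr rfl fun t _ => by ring

lemma sos_eq (r : ℝ) (hr0 : 0 < r) (hr1 : r < 1) (m : ℕ) (x : ℕ → ℝ) :
    ∑ n ∈ range (m+1), ∑ k ∈ range (m+1), x n * x k *
      (if n = k then 1 - r
       else (r ^ (Nat.dist n k - 1) - r ^ (Nat.dist n k + 1)) / 2)
    = (1-r)^2/2 * ((∑ t ∈ range m, (Y r (m+1) x t + Y r (m+1) x (t+1))^2)
        + (1+r)/(1-r) * (Y r (m+1) x 0)^2 + (Y r (m+1) x m)^2) := by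
  have hr0' : r ≠ 0 := hr0.ne'
  have hr1' : (1:ℝ) - r ≠ 0 := by linarith
  set sh : ℝ := (1-r^2)/(2*r) with hsh
  set ch : ℝ := (1-r)^2/(2*r) with hch
  have entry : ∀ n k : ℕ, n ≠ k →
      (r ^ (Nat.dist n k - 1) - r ^ (Nat.dist n k + 1)) / 2
        = sh * r ^ (Nat.dist n k) := by
    intro n k hne
    have hd : Nat.dist n k ≠ 0 := fun h0 => hne (Nat.eq_of_dist_eq_zero h0)
    have h1 : r ^ (Nat.dist n k) = r ^ (Nat.dist n k - 1) * r := by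
      rw [← pow_succ]; congr 1; omega
    have h2 : r ^ (Nat.dist n k + 1) = r ^ (Nat.dist n k - 1) * r^2 := by
      rw [← pow_add]; congr 1; omega
    rw [h1, h2, hsh]; field_simp
  have split : ∑ n ∈ range (m+1), ∑ k ∈ range (m+1), x n * x k *
      (if n = k then 1 - r
       else (r ^ (Nat.dist n k - 1) - r ^ (Nat.dist n k + 1)) / 2)
      = sh * (∑ n ∈ range (m+1), ∑ k ∈ range (m+1), x n * x k * r ^ (Nat.dist n k))
        - ch * ∑ n ∈ range (m+1), (x n)^2 := by
    rw [Finset.mul_sum, Finset.mul_sum, ← Finset.sum_sub_distrib]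
    refine Finset.sum_congr rfl fun n hn => ?_
    have hinner : ∀ k ∈ range (m+1), x n * x k *
        (if n = k then 1 - r
         else (r ^ (Nat.dist n k - 1) - r ^ (Nat.dist n k + 1)) / 2)
        = sh * (x n * x k * r ^ (Nat.dist n k))
          - (if n = k then ch * (x n * x k) else 0) := by
      intro k _
      by_cases h : n = k
      · subst h
        rw [if_pos rfl, if_pos rfl]
        simp only [Nat.dist_self, pow_zero, mul_one]
        rw [hsh, hch]; field_simp; ring
      · rw [if_neg h, if_neg h, entry n k h, sub_zero]; ring
    rw [Finset.sum_congr rfl hinner, Finset.sum_sub_distrib,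
      Finset.sum_ite_eq (range (m+1)) n (fun k => ch * (x n * x k)),
      if_pos hn, ← Finset.mul_sum]
    ring
  rw [split, identA]
  have hx : ∀ n ∈ range (m+1), (x n)^2 = (Y r (m+1) x n + (-r) * Y r (m+1) x (n+1))^2 := by
    intro n hn
    rw [Finset.mem_range] at hn
    have := Y_rec r (m+1) x (t := n) hn
    congr 1
    linarith
  rw [Finset.sum_congr rfl hx, expand_sq_sum]
  have YN : Y r (m+1) x (m+1) = 0 := Y_of_ge r (m+1) x le_rfl
  set S := ∑ t ∈ range (m+1), (Y r (m+1) x t)^2 with hS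
  set P := ∑ t ∈ range m, Y r (m+1) x t * Y r (m+1) x (t+1) with hP
  have f1 : ∑ t ∈ range m, (Y r (m+1) x (t+1))^2 = S - (Y r (m+1) x 0)^2 := by
    have := Finset.sum_range_succ' (fun t => (Y r (m+1) x t)^2) m
    rw [hS, this]; ring
  have f2 : ∑ t ∈ range (m+1), (Y r (m+1) x (t+1))^2 = S - (Y r (m+1) x 0)^2 := by
    rw [Finset.sum_range_succ, YN, ← f1]; norm_num
  have f3 : ∑ t ∈ range (m+1), Y r (m+1) x t * Y r (m+1) x (t+1) = P := by
    rw [Finset.sum_range_succ, YN, hP, mul_zero, add_zero]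
  have f4 : ∑ t ∈ range m, (Y r (m+1) x t)^2 = S - (Y r (m+1) x m)^2 := by
    rw [hS, Finset.sum_range_succ]; ring
  have e1 : ∑ t ∈ range m, (Y r (m+1) x t + Y r (m+1) x (t+1))^2
      = (S - (Y r (m+1) x m)^2) + (S - (Y r (m+1) x 0)^2) + 2 * P := by
    have hexp : ∑ t ∈ range m, (Y r (m+1) x t + Y r (m+1) x (t+1))^2
        = ∑ t ∈ range m, (Y r (m+1) x t)^2 + ∑ t ∈ range m, (Y r (m+1) x (t+1))^2
          + 2 * ∑ t ∈ range m, Y r (m+1) x t * Y r (m+1) x (t+1) := by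
      rw [Finset.mul_sum, ← Finset.sum_add_distrib, ← Finset.sum_add_distrib]
      exact Finset.sum_congr rfl fun t _ => by ring
    rw [hexp, f4, f1, hP]
  simp only [Nat.add_sub_cancel]
  rw [f1, f2, f3, e1]
  rw [hsh, hch]
  field_simp
  ring

lemma sos_pos (r : ℝ) (hr0 : 0 < r) (hr1 : r < 1) (m : ℕ) (x : ℕ → ℝ)
    (hx : ∃ n, n < m + 1 ∧ x n ≠ 0) :
    0 < (∑ t ∈ range m, (Y r (m+1) x t + Y r (m+1) x (t+1))^2)
        + (1+r)/(1-r) * (Y r (m+1) x 0)^2 + (Y r (m+1) x m)^2 := by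
  have hr1' : (0:ℝ) < 1 - r := by linarith
  have hco : (0:ℝ) < (1+r)/(1-r) := by positivity
  have h1 : 0 ≤ ∑ t ∈ range m, (Y r (m+1) x t + Y r (m+1) x (t+1))^2 :=
    Finset.sum_nonneg fun t _ => sq_nonneg _
  have h2 : 0 ≤ (1+r)/(1-r) * (Y r (m+1) x 0)^2 := by positivity
  have h3 : 0 ≤ (Y r (m+1) x m)^2 := sq_nonneg _
  by_contra hcon
  push_neg at hcon
  have hsum0 : ∑ t ∈ range m, (Y r (m+1) x t + Y r (m+1) x (t+1))^2 = 0 := by linarith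
  have hY0 : Y r (m+1) x 0 = 0 := by
    have h0 : (1+r)/(1-r) * (Y r (m+1) x 0)^2 = 0 := by linarith
    have := (mul_eq_zero.1 h0).resolve_left hco.ne'
    exact pow_eq_zero_iff (n := 2) (by norm_num) |>.1 this
  have hpair : ∀ t ∈ range m, Y r (m+1) x t + Y r (m+1) x (t+1) = 0 := by
    intro t ht
    have := (Finset.sum_eq_zero_iff_of_nonneg fun t _ => sq_nonneg _).1 hsum0 t ht
    exact pow_eq_zero_iff (n := 2) (by norm_num) |>.1 this
  have hYall : ∀ t, t ≤ m → Y r (m+1) x t = 0 := by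
    intro t
    induction t with
    | zero => intro _; exact hY0
    | succ t ih =>
      intro ht
      have h := hpair t (Finset.mem_range.2 (by omega))
      have := ih (by omega)
      linarith
  have hxz : ∀ n, n < m + 1 → x n = 0 := by
    intro n hn
    have hrec := Y_rec r (m+1) x (t := n) hn
    have hy1 : Y r (m+1) x n = 0 := hYall n (by omega)
    have hy2 : Y r (m+1) x (n+1) = 0 := by
      rcases Nat.lt_or_ge (n+1) (m+1) with h' | h'
      · exact hYall (n+1) (by omega)
      · exact Y_of_ge r (m+1) x h'
    rw [hy1, hy2] at hrec
    linarith [hrec]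
  obtain ⟨n, hn, hxn⟩ := hx
  exact hxn (hxz n hn)

end ToeplitzPD

namespace ToeplitzPD

lemma sos_combined (r : ℝ) (hr0 : 0 < r) (hr1 : r < 1) (m : ℕ) (x : ℕ → ℝ)
    (hx : ∃ n, n < m + 1 ∧ x n ≠ 0) :
    0 < ∑ n ∈ range (m+1), ∑ k ∈ range (m+1), x n * x k *
      (if n = k then 1 - r
       else (r ^ (Nat.dist n k - 1) - r ^ (Nat.dist n k + 1)) / 2) := by
  rw [sos_eq r hr0 hr1 m x]
  have h := sos_pos r hr0 hr1 m x hx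
  have h2 : (0:ℝ) < (1-r)^2/2 := by
    have : (0:ℝ) < 1 - r := by linarith
    positivity
  exact mul_pos h2 h

end ToeplitzPD



open MeasureTheory Real Finset Set

namespace ToeplitzPD

noncomputable def Cb (β : ℝ) : ℝ := ∫ s in Ioi (0:ℝ), phi β 1 s



lemma phi_pos {β a s : ℝ} (ha : 0 < a) (hs : 0 < s) : 0 < phi β a s := by
  unfold phi
  have h1 : Real.exp (-(a*s)) < 1 := Real.exp_lt_one_iff.2 (by nlinarith)
  have h2 : (0:ℝ) < s ^ (β-2) := Real.rpow_pos_of_pos hs _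
  nlinarith

lemma Cb_pos {β : ℝ} (hβ0 : 0 < β) (hβ1 : β < 1) : 0 < Cb β := by
  unfold Cb
  rw [setIntegral_pos_iff_support_of_nonneg_ae ?_ (integrableOn_phi hβ0 hβ1 zero_le_one)]
  · have hsub : Ioi (0:ℝ) ⊆ Function.support (phi β 1) := fun s hs =>
      (phi_pos one_pos hs).ne'
    rw [Set.inter_eq_right.2 hsub, Real.volume_Ioi]
    exact ENNReal.zero_lt_top
  · rw [Filter.EventuallyLE, ae_restrict_iff' measurableSet_Ioi]
    exact Filter.Eventually.of_forall fun s hs => (phi_pos one_pos hs).le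

end ToeplitzPD

namespace ToeplitzPD

-- off-diagonal kernel
noncomputable def kerO (β : ℝ) (m : ℕ) (s : ℝ) : ℝ :=
  (phi β ((m:ℝ)+1) s - phi β ((m:ℝ)-1) s)/2

lemma integrableOn_kerO {β : ℝ} (hβ0 : 0 < β) (hβ1 : β < 1) {m : ℕ} (hm : 1 ≤ m) :
    IntegrableOn (kerO β m) (Ioi (0:ℝ)) := by
  have h1 : (0:ℝ) ≤ (m:ℝ) + 1 := by positivity
  have h2 : (0:ℝ) ≤ (m:ℝ) - 1 := by
    have : (1:ℝ) ≤ (m:ℝ) := by exact_mod_cast hm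
    linarith
  exact ((integrableOn_phi hβ0 hβ1 h1).sub (integrableOn_phi hβ0 hβ1 h2)).div_const 2

lemma integral_kerO {β : ℝ} (hβ0 : 0 < β) (hβ1 : β < 1) {m : ℕ} (hm : 1 ≤ m) :
    ∫ s in Ioi (0:ℝ), kerO β m s
      = (((m:ℝ)+1) ^ (1-β) - ((m:ℝ)-1) ^ (1-β))/2 * Cb β := by
  have h1 : (0:ℝ) ≤ (m:ℝ) + 1 := by positivity
  have h2 : (0:ℝ) ≤ (m:ℝ) - 1 := by
    have : (1:ℝ) ≤ (m:ℝ) := by exact_mod_cast hm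
    linarith
  unfold kerO
  rw [integral_div, integral_sub (integrableOn_phi hβ0 hβ1 h1) (integrableOn_phi hβ0 hβ1 h2),
    integral_phi_scale hβ0 hβ1 h1, integral_phi_scale hβ0 hβ1 h2]
  unfold Cb
  ring

lemma exp_pow_eq {j : ℕ} {s : ℝ} : Real.exp (-((j:ℝ) * s)) = Real.exp (-s) ^ j := by
  rw [← Real.exp_nat_mul]
  congr 1
  ring

lemma kerO_eq {β : ℝ} {s : ℝ} (hs : 0 < s) {m : ℕ} (hm : 1 ≤ m) :
    kerO β m s = s ^ (β-2) *
      ((Real.exp (-s) ^ (m-1) - Real.exp (-s) ^ (m+1)) / 2) := by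
  unfold kerO phi
  have c1 : (m:ℝ) + 1 = ((m+1 : ℕ) : ℝ) := by push_cast; ring
  have c2 : (m:ℝ) - 1 = ((m-1 : ℕ) : ℝ) := by
    have : ((m-1:ℕ):ℝ) = (m:ℝ) - 1 := by
      rw [Nat.cast_sub hm]; norm_num
    linarith
  rw [c1, c2, exp_pow_eq (j := m+1) (s := s), exp_pow_eq (j := m-1) (s := s)]
  ring

end ToeplitzPD


/-- The symmetric Toeplitz matrix `H_N` with diagonal entries `d_0^{(β)}` and
off-diagonal entries `(d_{|n-k|-1}^{(β)} + d_{|n-k|}^{(β)})/2` is positive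
definite. -/
theorem toeplitz_matrix_posDef
    (β : ℝ) (hβ0 : 0 < β) (hβ1 : β < 1)
    (d : ℕ → ℝ) (hd : ∀ k, d k = ((k : ℝ) + 1) ^ (1 - β) - (k : ℝ) ^ (1 - β))
    (N : ℕ) (hN : 1 ≤ N)
    (H : Matrix (Fin N) (Fin N) ℝ)
    (hH : ∀ n k : Fin N, H n k =
      if n = k then d 0
      else (d (Nat.dist (n : ℕ) (k : ℕ) - 1) + d (Nat.dist (n : ℕ) (k : ℕ))) / 2) :
    H.PosDef := by
  obtain ⟨m, rfl⟩ : ∃ m, N = m + 1 := ⟨N - 1, by omega⟩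
  have hC : 0 < ToeplitzPD.Cb β := ToeplitzPD.Cb_pos hβ0 hβ1
  set C := ToeplitzPD.Cb β with hCdef
  have hd0 : d 0 = 1 := by
    simp [hd, Real.zero_rpow (show (1:ℝ) - β ≠ 0 by linarith)]
  rw [Matrix.posDef_iff_dotProduct_mulVec]
  constructor
  · -- Hermitian
    ext n k
    rw [Matrix.conjTranspose_apply, star_trivial, hH n k, hH k n]
    by_cases h : n = k
    · subst h; rfl
    · rw [if_neg h, if_neg (fun hh => h hh.symm), Nat.dist_comm]
  · intro x hx
    -- kernel function for each entry
    set kerF : Fin (m+1) → Fin (m+1) → ℝ → ℝ := fun n k s =>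
      if n = k then ToeplitzPD.phi β 1 s
      else ToeplitzPD.kerO β (Nat.dist (n:ℕ) (k:ℕ)) s with hkerF
    have hdistpos : ∀ n k : Fin (m+1), n ≠ k → 1 ≤ Nat.dist (n:ℕ) (k:ℕ) := by
      intro n k h
      have hv : (n:ℕ) ≠ (k:ℕ) := fun hh => h (Fin.ext hh)
      have h0 : Nat.dist (n:ℕ) (k:ℕ) ≠ 0 := fun h0 => hv (Nat.eq_of_dist_eq_zero h0)
      omega
    have hrep : ∀ n k : Fin (m+1),
        H n k = (1/C) * ∫ s in Ioi (0:ℝ), kerF n k s := by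
      intro n k
      rw [hH]
      by_cases h : n = k
      · rw [if_pos h, hd0]
        simp only [hkerF, if_pos h]
        rw [show (∫ s in Ioi (0:ℝ), ToeplitzPD.phi β 1 s) = C from rfl]
        field_simp
      · rw [if_neg h]
        simp only [hkerF, if_neg h]
        have hm1 := hdistpos n k h
        rw [ToeplitzPD.integral_kerO hβ0 hβ1 hm1]
        set q : ℕ := Nat.dist (n:ℕ) (k:ℕ) with hq
        have hcast : ((q - 1 : ℕ) : ℝ) = (q:ℝ) - 1 := by
          rw [Nat.cast_sub hm1]; norm_num
        rw [hd, hd, hcast]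
        rw [show (q:ℝ) - 1 + 1 = (q:ℝ) by ring]
        field_simp
        rw [hCdef]; ring
    set F : Fin (m+1) → Fin (m+1) → ℝ → ℝ := fun n k s =>
      (x n * x k) * kerF n k s with hF
    have hFint : ∀ n k : Fin (m+1), IntegrableOn (F n k) (Ioi (0:ℝ)) := by
      intro n k
      by_cases h : n = k
      · simp only [hF, hkerF, if_pos h]
        exact (ToeplitzPD.integrableOn_phi hβ0 hβ1 zero_le_one).const_mul _
      · simp only [hF, hkerF, if_neg h]
        exact (ToeplitzPD.integrableOn_kerO hβ0 hβ1 (hdistpos n k h)).const_mul _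
    have hQ1 : dotProduct (star x) (H.mulVec x)
        = ∑ n : Fin (m+1), ∑ k : Fin (m+1), x n * (H n k * x k) := by
      simp [dotProduct, Matrix.mulVec, Finset.mul_sum]
    have hQ2 : ∀ n k : Fin (m+1),
        x n * (H n k * x k) = (1/C) * ∫ s in Ioi (0:ℝ), F n k s := by
      intro n k
      have h2 : ∫ s in Ioi (0:ℝ), F n k s
          = (x n * x k) * ∫ s in Ioi (0:ℝ), kerF n k s := by
        simp only [hF]
        exact integral_const_mul _ _
      rw [h2, hrep n k]
      ring
    have hQ3 : dotProduct (star x) (H.mulVec x)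
        = (1/C) * ∫ s in Ioi (0:ℝ), (∑ n : Fin (m+1), ∑ k : Fin (m+1), F n k s) := by
      rw [hQ1]
      calc ∑ n : Fin (m+1), ∑ k : Fin (m+1), x n * (H n k * x k)
          = ∑ n : Fin (m+1), ∑ k : Fin (m+1), (1/C) * ∫ s in Ioi (0:ℝ), F n k s := by
            exact Finset.sum_congr rfl fun n _ => Finset.sum_congr rfl fun k _ => hQ2 n k
        _ = (1/C) * ∑ n : Fin (m+1), ∑ k : Fin (m+1), ∫ s in Ioi (0:ℝ), F n k s := by
            rw [Finset.mul_sum]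
            exact Finset.sum_congr rfl fun n _ => by rw [Finset.mul_sum]
        _ = (1/C) * ∫ s in Ioi (0:ℝ), (∑ n : Fin (m+1), ∑ k : Fin (m+1), F n k s) := by
            congr 1
            rw [integral_finset_sum Finset.univ
              (fun n _ => integrable_finset_sum Finset.univ (fun k _ => hFint n k))]
            exact Finset.sum_congr rfl fun n _ =>
              (integral_finset_sum Finset.univ (fun k _ => hFint n k)).symm
    -- nonzero coordinate
    set x' : ℕ → ℝ := fun j => if h : j < m + 1 then x ⟨j, h⟩ else 0 with hx'
    have hx'val : ∀ n : Fin (m+1), x' (n:ℕ) = x n := by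
      intro n
      simp only [hx', dif_pos n.isLt]
    have hxnz : ∃ n, n < m + 1 ∧ x' n ≠ 0 := by
      obtain ⟨i, hi⟩ := Function.ne_iff.1 hx
      exact ⟨(i:ℕ), i.isLt, by rw [hx'val i]; simpa using hi⟩
    -- pointwise value of the summed kernel
    have hW : ∀ s, 0 < s →
        (∑ n : Fin (m+1), ∑ k : Fin (m+1), F n k s)
        = s ^ (β-2) * ∑ n ∈ Finset.range (m+1), ∑ k ∈ Finset.range (m+1),
            x' n * x' k *
            (if n = k then 1 - Real.exp (-s)
             else (Real.exp (-s) ^ (Nat.dist n k - 1)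
                - Real.exp (-s) ^ (Nat.dist n k + 1)) / 2) := by
      intro s hs
      rw [Finset.mul_sum]
      rw [← Fin.sum_univ_eq_sum_range]
      refine Finset.sum_congr rfl fun n _ => ?_
      rw [Finset.mul_sum, ← Fin.sum_univ_eq_sum_range]
      refine Finset.sum_congr rfl fun k _ => ?_
      rw [hx'val n, hx'val k]
      simp only [hF, hkerF]
      by_cases h : n = k
      · have hv : (n:ℕ) = (k:ℕ) := by rw [h]
        rw [if_pos h, if_pos hv]
        unfold ToeplitzPD.phi
        rw [one_mul]
        ring
      · have hv : ¬ (n:ℕ) = (k:ℕ) := fun hh => h (Fin.ext hh)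
        rw [if_neg h, if_neg hv, ToeplitzPD.kerO_eq hs (hdistpos n k h)]
        ring
    set W : ℝ → ℝ := fun s => ∑ n : Fin (m+1), ∑ k : Fin (m+1), F n k s with hWdef
    have hWpos : ∀ s ∈ Ioi (0:ℝ), 0 < W s := by
      intro s hs
      rw [hWdef]
      simp only
      rw [hW s hs]
      have hr0 : 0 < Real.exp (-s) := Real.exp_pos _
      have hr1 : Real.exp (-s) < 1 := Real.exp_lt_one_iff.2 (by simpa using hs)
      exact mul_pos (Real.rpow_pos_of_pos hs _)
        (ToeplitzPD.sos_combined _ hr0 hr1 m x' hxnz)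
    have hWint : IntegrableOn W (Ioi (0:ℝ)) :=
      integrable_finset_sum Finset.univ
        (fun n _ => integrable_finset_sum Finset.univ (fun k _ => hFint n k))
    have hIpos : 0 < ∫ s in Ioi (0:ℝ), W s := by
      rw [setIntegral_pos_iff_support_of_nonneg_ae ?_ hWint]
      · have hsub : Ioi (0:ℝ) ⊆ Function.support W := fun s hs => (hWpos s hs).ne'
        rw [Set.inter_eq_right.2 hsub, Real.volume_Ioi]
        exact ENNReal.zero_lt_top
      · rw [Filter.EventuallyLE, ae_restrict_iff' measurableSet_Ioi]
        exact Filter.Eventually.of_forall fun s hs => (hWpos s hs).le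
    rw [hQ3]
    exact mul_pos (by positivity) hIpos
end

section
/- Let 0 < β < 1, τ > 0, h > 0, and M ≥ 1, N ≥ 1 integers, and define d_k^{(β)} = (k+1)^{1−β} − k^{1−β} for integers k ≥ 0. Let U^0, U^1, …, U^N be grid functions in V_h (i.e., U^n_0 = U^n_M = 0 for each n). Then Σ_{n=1}^{N} Σ_{k=1}^{n} d_{n−k}^{(β)} · (∇_t(δ_x² U^k), ∇_t U^n) ≤ 0. -/
set_option linter.unusedVariables false

section Part1
open Set

section psi
variable {γ : ℝ}

private lemma psi_hasDeriv (hγ0 : 0 < γ) {x : ℝ} (hx : 0 < x) :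
    HasDerivAt (fun x : ℝ => (x+1) ^ γ - x ^ γ)
      (γ * (x+1) ^ (γ-1) - γ * x ^ (γ-1)) x := by
  have h1 : HasDerivAt (fun x : ℝ => (x+1) ^ γ) (1 * γ * (x+1) ^ (γ-1)) x :=
    HasDerivAt.rpow_const ((hasDerivAt_id x).add_const 1) (Or.inl (by positivity))
  have h2 : HasDerivAt (fun x : ℝ => x ^ γ) (γ * x ^ (γ-1)) x :=
    Real.hasDerivAt_rpow_const (Or.inl hx.ne')
  have := h1.sub h2
  rw [one_mul] at this
  exact this

private lemma phi_hasDeriv (hγ0 : 0 < γ) {x : ℝ} (hx : 0 < x) :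
    HasDerivAt (fun x : ℝ => γ * (x+1) ^ (γ-1) - γ * x ^ (γ-1))
      (γ * ((γ-1) * (x+1) ^ (γ-1-1)) - γ * ((γ-1) * x ^ (γ-1-1))) x := by
  have h1 : HasDerivAt (fun x : ℝ => (x+1) ^ (γ-1)) (1 * (γ-1) * (x+1) ^ (γ-1-1)) x :=
    HasDerivAt.rpow_const ((hasDerivAt_id x).add_const 1) (Or.inl (by positivity))
  have h2 : HasDerivAt (fun x : ℝ => x ^ (γ-1)) ((γ-1) * x ^ (γ-1-1)) x :=
    Real.hasDerivAt_rpow_const (Or.inl hx.ne')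
  have := (h1.const_mul γ).sub (h2.const_mul γ)
  rw [one_mul] at this
  exact this

private lemma psi_cont (hγ0 : 0 < γ) :
    ContinuousOn (fun x : ℝ => (x+1) ^ γ - x ^ γ) (Ici 0) := by
  intro x hx
  have h1 : ContinuousAt (fun x : ℝ => (x+1) ^ γ) x :=
    ContinuousAt.rpow_const (by fun_prop) (Or.inr hγ0.le)
  have h2 : ContinuousAt (fun x : ℝ => x ^ γ) x :=
    Real.continuousAt_rpow_const x γ (Or.inr hγ0.le)
  exact (h1.sub h2).continuousWithinAt

private lemma psi_antitone (hγ0 : 0 < γ) (hγ1 : γ < 1) :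
    AntitoneOn (fun x : ℝ => (x+1) ^ γ - x ^ γ) (Ici 0) := by
  apply antitoneOn_of_deriv_nonpos (convex_Ici 0) (psi_cont hγ0)
  · rw [interior_Ici]
    exact fun x hx => (psi_hasDeriv hγ0 hx).differentiableAt.differentiableWithinAt
  · rw [interior_Ici]
    intro x hx
    rw [(psi_hasDeriv hγ0 hx).deriv]
    have hle : (x+1) ^ (γ-1) ≤ x ^ (γ-1) :=
      Real.rpow_le_rpow_of_nonpos hx (by linarith) (by linarith)
    nlinarith

private lemma psi_convex (hγ0 : 0 < γ) (hγ1 : γ < 1) :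
    ConvexOn ℝ (Ici 0) (fun x : ℝ => (x+1) ^ γ - x ^ γ) := by
  apply MonotoneOn.convexOn_of_deriv (convex_Ici 0) (psi_cont hγ0)
  · rw [interior_Ici]
    exact fun x hx => (psi_hasDeriv hγ0 hx).differentiableAt.differentiableWithinAt
  · rw [interior_Ici]
    have hmono : MonotoneOn (fun x : ℝ => γ * (x+1) ^ (γ-1) - γ * x ^ (γ-1)) (Ioi 0) := by
      apply monotoneOn_of_deriv_nonneg (convex_Ioi 0)
      · intro x hx
        exact (phi_hasDeriv hγ0 hx).continuousAt.continuousWithinAt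
      · rw [interior_Ioi]
        exact fun x hx => (phi_hasDeriv hγ0 hx).differentiableAt.differentiableWithinAt
      · rw [interior_Ioi]
        intro x hx
        rw [(phi_hasDeriv hγ0 hx).deriv]
        have hle : (x+1) ^ (γ-1-1) ≤ x ^ (γ-1-1) :=
          Real.rpow_le_rpow_of_nonpos hx (by linarith) (by linarith)
        nlinarith [mul_le_mul_of_nonpos_left hle (show γ*(γ-1) ≤ 0 by nlinarith)]
    intro x hx y hy hxy
    rw [(psi_hasDeriv hγ0 hx).deriv, (psi_hasDeriv hγ0 hy).deriv]
    exact hmono hx hy hxy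

end psi

end Part1

section Rest
open Finset

private lemma sum_shift_reflect (n : ℕ) (f : ℕ → ℝ) :
    ∑ k ∈ Icc 1 n, f k = ∑ j ∈ range n, f (n - j) := by
  refine Finset.sum_nbij' (fun k => n - k) (fun j => n - j) ?_ ?_ ?_ ?_ ?_
  · intro k hk; simp only [mem_Icc] at hk; simp only [mem_range]; omega
  · intro j hj; simp only [mem_range] at hj; simp only [mem_Icc]; omega
  · intro k hk; simp only [mem_Icc] at hk; show n - (n - k) = k; omega
  · intro j hj; simp only [mem_range] at hj; show n - (n - j) = j; omega
  · intro k hk; simp only [mem_Icc] at hk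
    show f k = f (n - (n - k))
    congr 1; omega

private lemma square_sum_identity (b : ℕ → ℝ) :
    ∀ m : ℕ, 2 * (∑ n ∈ Icc 1 m, b n * ∑ k ∈ Icc 1 n, b k) =
      (∑ k ∈ Icc 1 m, b k) ^ 2 + ∑ n ∈ Icc 1 m, (b n) ^ 2 := by
  intro m
  induction m with
  | zero => simp
  | succ m ih =>
      have h1 : (1 : ℕ) ≤ m + 1 := by omega
      rw [sum_Icc_succ_top h1, sum_Icc_succ_top h1, sum_Icc_succ_top h1]
      linear_combination ih

private lemma quad_nonneg (d : ℕ → ℝ) (hd0 : ∀ j, 0 ≤ d j)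
    (hdm : ∀ j, d (j+1) ≤ d j)
    (hdc : ∀ j, d (j+1) - d (j+2) ≤ d j - d (j+1))
    (N : ℕ) (b : ℕ → ℝ) (hb0 : b 0 = 0) (hbN : ∀ n, N < n → b n = 0) :
    0 ≤ ∑ n ∈ Icc 1 N, ∑ k ∈ Icc 1 n, d (n - k) * (b k * b n) := by
  set T : ℕ → ℝ := fun j => ∑ n ∈ Icc 1 N, b n * b (n - j) with hT
  set G : ℕ → ℝ := fun m => ∑ j ∈ range m, T j with hG
  set K : ℕ → ℝ := fun m => ∑ j ∈ range m, G (j+1) with hK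
  -- rewrite Q
  have hQ : ∑ n ∈ Icc 1 N, ∑ k ∈ Icc 1 n, d (n - k) * (b k * b n)
      = ∑ j ∈ range N, d j * T j := by
    have hinner : ∀ n ∈ Icc 1 N, ∑ k ∈ Icc 1 n, d (n - k) * (b k * b n)
        = ∑ j ∈ range N, d j * (b n * b (n - j)) := by
      intro n hn
      simp only [mem_Icc] at hn
      have h1 : ∑ k ∈ Icc 1 n, d (n - k) * (b k * b n)
          = ∑ j ∈ range n, d j * (b n * b (n - j)) := by
        rw [sum_shift_reflect n (fun k => d (n - k) * (b k * b n))]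
        refine Finset.sum_congr rfl fun j hj => ?_
        simp only [mem_range] at hj
        show d (n - (n - j)) * (b (n - j) * b n) = d j * (b n * b (n - j))
        have h2 : n - (n - j) = j := by omega
        rw [h2]; ring
      rw [h1]
      refine Finset.sum_subset ?_ ?_
      · intro j hj; simp only [mem_range] at *; omega
      · intro j _ hj; simp only [mem_range] at hj
        have : n - j = 0 := by omega
        rw [this, hb0]; ring
    rw [Finset.sum_congr rfl hinner, Finset.sum_comm]
    refine Finset.sum_congr rfl fun j _ => ?_
    simp only [hT]
    rw [Finset.mul_sum]
  rw [hQ]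
  -- Abel summation twice
  have habel1 : ∑ j ∈ range N, d j * T j
      = d (N-1) * G N - ∑ i ∈ range (N-1), (d (i+1) - d i) * G (i+1) := by
    simpa only [smul_eq_mul, hG] using Finset.sum_range_by_parts d T N
  have habel2 : ∑ i ∈ range (N-1), (fun i => d i - d (i+1)) i * G (i+1)
      = (d (N-1-1) - d (N-1-1+1)) * K (N-1)
        - ∑ i ∈ range (N-1-1),
            ((d (i+1) - d (i+1+1)) - (d i - d (i+1))) * K (i+1) := by
    simpa only [smul_eq_mul, hK] using
      Finset.sum_range_by_parts (fun i => d i - d (i+1)) (fun j => G (j+1)) (N-1)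
  -- nonnegativity of T 0, G N, K m
  have hT0 : 0 ≤ T 0 := by
    simp only [hT]
    refine Finset.sum_nonneg fun n _ => ?_
    simp only [Nat.sub_zero]
    exact mul_self_nonneg _
  have hGN : 0 ≤ G N := by
    have hGrw : G N = ∑ n ∈ Icc 1 N, b n * ∑ k ∈ Icc 1 n, b k := by
      simp only [hG, hT]
      rw [Finset.sum_comm]
      refine Finset.sum_congr rfl fun n hn => ?_
      simp only [mem_Icc] at hn
      rw [← Finset.mul_sum]
      congr 1
      have h1 : ∑ j ∈ range N, b (n - j) = ∑ j ∈ range n, b (n - j) := by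
        symm
        refine Finset.sum_subset ?_ ?_
        · intro j hj; simp only [mem_range] at *; omega
        · intro j _ hj; simp only [mem_range] at hj
          have : n - j = 0 := by omega
          rw [this, hb0]
      rw [h1, ← sum_shift_reflect n b]
    have := square_sum_identity b N
    rw [hGrw]
    nlinarith [Finset.sum_nonneg (fun n (_ : n ∈ Icc 1 N) => sq_nonneg (b n)),
      sq_nonneg (∑ k ∈ Icc 1 N, b k)]
  -- the shift lemma
  have hshift : ∀ j m L : ℕ, j ≤ m → N + m ≤ L →
      ∑ n ∈ Icc 1 L, b (n - j) * b (n - m) = T (m - j) := by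
    intro j m L hjm hL
    have hsub : ∑ n ∈ Icc (j+1) (N+j), b (n - j) * b (n - m)
        = ∑ n ∈ Icc 1 L, b (n - j) * b (n - m) := by
      refine Finset.sum_subset ?_ ?_
      · intro n hn; simp only [mem_Icc] at *; omega
      · intro n _ hn
        simp only [mem_Icc] at hn
        rcases Nat.lt_or_ge n (j+1) with hc | hc
        · have : n - j = 0 := by omega
          rw [this, hb0, zero_mul]
        · have : N < n - j := by omega
          rw [hbN _ this, zero_mul]
    rw [← hsub]
    simp only [hT]
    refine Finset.sum_nbij' (fun n => n - j) (fun n' => n' + j) ?_ ?_ ?_ ?_ ?_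
    · intro n hn; simp only [mem_Icc] at *; omega
    · intro n' hn'; simp only [mem_Icc] at *; omega
    · intro n hn; simp only [mem_Icc] at hn; show n - j + j = n; omega
    · intro n' hn'; simp only [mem_Icc] at hn'; show n' + j - j = n'; omega
    · intro n hn; simp only [mem_Icc] at hn
      show b (n - j) * b (n - m) = b (n - j) * b (n - j - (m - j))
      have h1 : n - m = n - j - (m - j) := by omega
      rw [h1]
  -- the Fejér-type identity 2 K m = F m + m T 0
  set W : ℕ → ℕ → ℝ := fun m n => ∑ j ∈ range m, b (n - j) with hW
  set F : ℕ → ℝ := fun m => ∑ n ∈ Icc 1 (N+m), (W m n) ^ 2 with hF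
  have hKF : ∀ m, 2 * K m = F m + m * T 0 := by
    intro m
    induction m with
    | zero => simp [hK, hF, hW]
    | succ m ih =>
        have hFm : F m = ∑ n ∈ Icc 1 (N+m+1), (W m n) ^ 2 := by
          simp only [hF]
          rw [sum_Icc_succ_top (show (1:ℕ) ≤ N + m + 1 by omega)]
          have hw0 : W m (N+m+1) = 0 := by
            simp only [hW]
            refine Finset.sum_eq_zero fun j hj => ?_
            simp only [mem_range] at hj
            exact hbN _ (by omega)
          rw [hw0]; ring
        have hWsucc : ∀ n, W (m+1) n = W m n + b (n - m) := by
          intro n; simp only [hW]; exact Finset.sum_range_succ _ _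
        have hcross : ∑ n ∈ Icc 1 (N+m+1), W m n * b (n - m) = G (m+1) - T 0 := by
          have h1 : ∑ n ∈ Icc 1 (N+m+1), W m n * b (n - m)
              = ∑ j ∈ range m, ∑ n ∈ Icc 1 (N+m+1), b (n - j) * b (n - m) := by
            rw [Finset.sum_comm]
            refine Finset.sum_congr rfl fun n _ => ?_
            simp only [hW]
            rw [Finset.sum_mul]
          rw [h1]
          have h2 : ∀ j ∈ range m, ∑ n ∈ Icc 1 (N+m+1), b (n - j) * b (n - m)
              = T (m - j) := by
            intro j hj; simp only [mem_range] at hj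
            exact hshift j m (N+m+1) (by omega) (by omega)
          rw [Finset.sum_congr rfl h2, ← sum_shift_reflect m T]
          have h4 : G (m+1) = T 0 + ∑ k ∈ Icc 1 m, T k := by
            simp only [hG]
            rw [Finset.sum_range_succ', add_comm]
            congr 1
            rw [← Finset.Ico_add_one_right_eq_Icc, Finset.sum_Ico_eq_sum_range]
            simp only [Nat.add_sub_cancel, Nat.succ_sub_one]
            exact Finset.sum_congr rfl fun i _ => by rw [Nat.add_comm]
          rw [h4]; ring
        have hsq : ∑ n ∈ Icc 1 (N+m+1), b (n - m) ^ 2 = T 0 := by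
          have h5 := hshift m m (N+m+1) le_rfl (by omega)
          simp only [Nat.sub_self] at h5
          rw [← h5]
          exact Finset.sum_congr rfl fun n _ => by ring
        have hFsucc : F (m+1) = F m + 2 * G (m+1) - T 0 := by
          have hL : F (m+1) = ∑ n ∈ Icc 1 (N+m+1),
              ((W m n)^2 + 2 * (W m n * b (n - m)) + b (n - m) ^ 2) := by
            simp only [hF]
            rw [show N + (m+1) = N + m + 1 from by omega]
            refine Finset.sum_congr rfl fun n _ => ?_
            rw [hWsucc]; ring
          rw [hL, Finset.sum_add_distrib, Finset.sum_add_distrib, ← Finset.mul_sum,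
            hcross, hsq, ← hFm]
          ring
        have hKsucc : K (m+1) = K m + G (m+1) := by
          simp only [hK]; exact Finset.sum_range_succ _ _
        rw [hKsucc, hFsucc]
        push_cast
        linarith
  have hKnn : ∀ m, 0 ≤ K m := by
    intro m
    have h1 : 0 ≤ F m := by
      simp only [hF]
      exact Finset.sum_nonneg fun n _ => sq_nonneg _
    have h2 := hKF m
    nlinarith [mul_nonneg (Nat.cast_nonneg (α := ℝ) m) hT0]
  -- put it together
  rw [habel1]
  have hstep : ∑ i ∈ range (N-1), (d (i+1) - d i) * G (i+1)
      = - ∑ i ∈ range (N-1), (fun i => d i - d (i+1)) i * G (i+1) := by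
    rw [← Finset.sum_neg_distrib]
    exact Finset.sum_congr rfl fun i _ => by ring
  rw [hstep, habel2]
  have hsum_nonpos : ∑ i ∈ range (N-1-1),
      ((d (i+1) - d (i+1+1)) - (d i - d (i+1))) * K (i+1) ≤ 0 := by
    refine Finset.sum_nonpos fun i _ => ?_
    have h6 : (d (i+1) - d (i+1+1)) - (d i - d (i+1)) ≤ 0 := by
      have := hdc i; linarith
    exact mul_nonpos_of_nonpos_of_nonneg h6 (hKnn _)
  have hc1 : 0 ≤ d (N-1) * G N := mul_nonneg (hd0 _) hGN
  have hc2 : 0 ≤ (d (N-1-1) - d (N-1-1+1)) * K (N-1) :=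
    mul_nonneg (by have := hdm (N-1-1); linarith) (hKnn _)
  linarith


private lemma sbp_aux (v w : ℕ → ℝ) :
    ∀ m : ℕ, ∑ i ∈ Icc 1 m, (v (i-1) - 2 * v i + v (i+1)) * w i
      + ∑ i ∈ Icc 1 (m+1), (v i - v (i-1)) * (w i - w (i-1))
      = (v (m+1) - v m) * w (m+1) - (v 1 - v 0) * w 0 := by
  intro m
  induction m with
  | zero => simp; ring
  | succ m ih =>
      rw [sum_Icc_succ_top (show (1:ℕ) ≤ m + 1 by omega),
        sum_Icc_succ_top (show (1:ℕ) ≤ m + 1 + 1 by omega)]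
      simp only [Nat.add_sub_cancel]
      linear_combination ih

private lemma sbp (v w : ℕ → ℝ) (M : ℕ) (hM : 1 ≤ M) (hw0 : w 0 = 0) (hwM : w M = 0) :
    ∑ i ∈ Icc 1 (M-1), (v (i-1) - 2 * v i + v (i+1)) * w i
      = - ∑ i ∈ Icc 1 M, (v i - v (i-1)) * (w i - w (i-1)) := by
  obtain ⟨m, rfl⟩ : ∃ m, M = m + 1 := ⟨M - 1, by omega⟩
  have h := sbp_aux v w m
  simp only [Nat.add_sub_cancel] at h ⊢
  rw [hwM, hw0] at h
  linarith

/-- The key nonpositivity estimate (32): the double sum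
`Σ_{n=1}^{N} Σ_{k=1}^{n} d_{n−k}^{(β)} (∇_t(δ_x² U^k), ∇_t U^n)` is
nonpositive for grid functions vanishing at the endpoints. -/
theorem weighted_double_sum_nonpos
    (β τ h : ℝ) (hβ0 : 0 < β) (hβ1 : β < 1) (hτ : 0 < τ) (hh : 0 < h)
    (M N : ℕ) (hM : 1 ≤ M) (hN : 1 ≤ N)
    (d : ℕ → ℝ) (hd : ∀ k, d k = ((k : ℝ) + 1) ^ (1 - β) - (k : ℝ) ^ (1 - β))
    (U : ℕ → ℕ → ℝ) (hU : ∀ n ≤ N, U n 0 = 0 ∧ U n M = 0) :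
    ∑ n ∈ Finset.Icc 1 N, ∑ k ∈ Finset.Icc 1 n, d (n - k) *
        (h * ∑ i ∈ Finset.Icc 1 (M - 1),
          (((U k (i - 1) - 2 * U k i + U k (i + 1)) / h ^ 2
            - (U (k - 1) (i - 1) - 2 * U (k - 1) i + U (k - 1) (i + 1)) / h ^ 2) / τ)
          * ((U n i - U (n - 1) i) / τ))
      ≤ 0 := by
  have hh' : h ≠ 0 := ne_of_gt hh
  have hτ' : τ ≠ 0 := ne_of_gt hτ
  set γ : ℝ := 1 - β with hγ
  have hγ0 : 0 < γ := by rw [hγ]; linarith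
  have hγ1 : γ < 1 := by rw [hγ]; linarith
  have hdpsi : ∀ k : ℕ, d k = (fun x : ℝ => (x+1) ^ γ - x ^ γ) (k : ℝ) := fun k => hd k
  have hd0 : ∀ j : ℕ, 0 ≤ d j := by
    intro j
    rw [hd]
    have : (j : ℝ) ^ γ ≤ ((j : ℝ) + 1) ^ γ :=
      Real.rpow_le_rpow (Nat.cast_nonneg j) (by linarith) (by linarith)
    linarith
  have hdm : ∀ j : ℕ, d (j+1) ≤ d j := by
    intro j
    rw [hdpsi (j+1), hdpsi j]
    exact psi_antitone hγ0 hγ1 (Set.mem_Ici.mpr (Nat.cast_nonneg (α := ℝ) j))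
      (Set.mem_Ici.mpr (Nat.cast_nonneg (α := ℝ) (j+1)))
      (Nat.cast_le.mpr (by omega))
  have hdc : ∀ j : ℕ, d (j+1) - d (j+2) ≤ d j - d (j+1) := by
    intro j
    have hcv := (psi_convex hγ0 hγ1).2 (Set.mem_Ici.mpr (Nat.cast_nonneg (α := ℝ) j))
      (Set.mem_Ici.mpr (Nat.cast_nonneg (α := ℝ) (j+2)))
      (by norm_num : (0:ℝ) ≤ 1/2) (by norm_num : (0:ℝ) ≤ 1/2) (by norm_num)
    have hmid : (1/2 : ℝ) • ((j:ℕ):ℝ) + (1/2 : ℝ) • (((j+2:ℕ)):ℝ) = (((j+1:ℕ)):ℝ) := by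
      simp only [smul_eq_mul]; push_cast; ring
    rw [hmid] at hcv
    rw [hdpsi j, hdpsi (j+1), hdpsi (j+2)]
    simp only [smul_eq_mul] at hcv
    simp only []
    linarith
  set c : ℕ → ℕ → ℝ :=
    fun k i => (U k i - U (k-1) i) - (U k (i-1) - U (k-1) (i-1)) with hc
  set P : ℕ → ℕ → ℝ := fun n k => ∑ i ∈ Icc 1 M, c k i * c n i with hP
  have hinner : ∀ n ∈ Icc 1 N, ∀ k ∈ Icc 1 n,
      (h * ∑ i ∈ Icc 1 (M - 1),
          (((U k (i - 1) - 2 * U k i + U k (i + 1)) / h ^ 2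
            - (U (k - 1) (i - 1) - 2 * U (k - 1) i + U (k - 1) (i + 1)) / h ^ 2) / τ)
          * ((U n i - U (n - 1) i) / τ))
        = - ((1/(h * τ^2)) * P n k) := by
    intro n hn k hk
    simp only [mem_Icc] at hn hk
    set v : ℕ → ℝ := fun i => U k i - U (k-1) i with hv
    set w : ℕ → ℝ := fun i => U n i - U (n-1) i with hw
    have hterm : ∀ i : ℕ, (((U k (i - 1) - 2 * U k i + U k (i + 1)) / h ^ 2
            - (U (k - 1) (i - 1) - 2 * U (k - 1) i + U (k - 1) (i + 1)) / h ^ 2) / τ)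
          * ((U n i - U (n - 1) i) / τ)
        = (1/(h^2 * τ^2)) * ((v (i-1) - 2 * v i + v (i+1)) * w i) := by
      intro i
      simp only [hv, hw]
      field_simp
      ring
    have hw0 : w 0 = 0 := by
      simp only [hw]
      rw [(hU n (by omega)).1, (hU (n-1) (by omega)).1]
      ring
    have hwM : w M = 0 := by
      simp only [hw]
      rw [(hU n (by omega)).2, (hU (n-1) (by omega)).2]
      ring
    rw [Finset.sum_congr rfl (fun i _ => hterm i), ← Finset.mul_sum,
      sbp v w M hM hw0 hwM]
    have hcc : ∀ i : ℕ, (v i - v (i-1)) * (w i - w (i-1)) = c k i * c n i := by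
      intro i; simp only [hv, hw, hc]
    rw [Finset.sum_congr rfl (fun i _ => hcc i)]
    simp only [hP]
    field_simp
  rw [Finset.sum_congr rfl (fun n hn => Finset.sum_congr rfl (fun k hk =>
    by rw [hinner n hn k hk]))]
  have h1 : ∀ n ∈ Icc 1 N, ∀ k ∈ Icc 1 n,
      d (n - k) * -(1/(h * τ^2) * P n k) = -(1/(h * τ^2) * (d (n - k) * P n k)) :=
    fun n _ k _ => by ring
  rw [Finset.sum_congr rfl (fun n hn => Finset.sum_congr rfl (fun k hk => h1 n hn k hk))]
  simp only [Finset.sum_neg_distrib, ← Finset.mul_sum]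
  rw [neg_nonpos]
  refine mul_nonneg (by positivity) ?_
  have h2 : ∀ n ∈ Icc 1 N, ∀ k ∈ Icc 1 n,
      d (n - k) * P n k = ∑ i ∈ Icc 1 M, d (n - k) * (c k i * c n i) :=
    fun n _ k _ => by simp only [hP]; rw [Finset.mul_sum]
  rw [Finset.sum_congr rfl (fun n hn => Finset.sum_congr rfl (fun k hk => h2 n hn k hk))]
  rw [Finset.sum_congr rfl (fun n _ => Finset.sum_comm), Finset.sum_comm]
  refine Finset.sum_nonneg fun i _ => ?_
  set b : ℕ → ℝ := fun k => if 1 ≤ k ∧ k ≤ N then c k i else 0 with hb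
  have hq := quad_nonneg d hd0 hdm hdc N b
    (by simp only [hb]; rw [if_neg (by omega)])
    (fun n hn => by simp only [hb]; rw [if_neg (by omega)])
  have h3 : ∑ n ∈ Icc 1 N, ∑ k ∈ Icc 1 n, d (n - k) * (b k * b n)
      = ∑ n ∈ Icc 1 N, ∑ k ∈ Icc 1 n, d (n - k) * (c k i * c n i) := by
    refine Finset.sum_congr rfl fun n hn => Finset.sum_congr rfl fun k hk => ?_
    simp only [mem_Icc] at hn hk
    simp only [hb]
    rw [if_pos (by omega), if_pos (by omega)]
  rwa [h3] at hq

end Rest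
end
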